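/- arXiv:2405.01404 — 10 statements merged into one kernel-verified Lean document; each statement's English description precedes it below -/
import Mathlib

section
/- For any vector y strictly dominating the reference vector η in every component, the direction λ*_η(y) := (y − η)/‖y − η‖₂ maximizes the length scalarisation s_{η,λ}(y) over all positive unit vectors λ, and the maximal value equals ‖y − η‖₂. -/
/-- The length scalarisation function `s_{η,λ}(y) = min_m max(y^(m) - η^(m), 0) / λ^(m)`. -/
noncomputable def sLen {M : ℕ} (η lam y : EuclideanSpace ℝ (Fin M)) : ℝ :=
  ⨅ m, max (y m - η m) 0 / lam m

/-- The positive part of the unit sphere `S^{M-1}_+`. -/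
def Splus (M : ℕ) : Set (EuclideanSpace ℝ (Fin M)) :=
  {z | (∀ m, 0 < z m) ∧ ‖z‖ = 1}

/-- for `y` strictly dominating `η`, the direction `λ* = (y - η)/‖y - η‖₂`
lies in `S^{M-1}_+`, it maximises `λ ↦ s_{η,λ}(y)` over positive unit vectors, and the
maximal value equals `‖y - η‖₂`. -/
theorem stmt2 (M : ℕ) (hM : 1 ≤ M) (η y : EuclideanSpace ℝ (Fin M))
    (hy : ∀ m, η m < y m) :
    ‖y - η‖⁻¹ • (y - η) ∈ Splus M ∧
    sLen η (‖y - η‖⁻¹ • (y - η)) y = ‖y - η‖ ∧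
    ∀ lam ∈ Splus M, sLen η lam y ≤ ‖y - η‖ := by
  haveI : NeZero M := ⟨by omega⟩
  have hsub : ∀ m, (y - η) m = y m - η m := fun m => rfl
  have hne : y - η ≠ 0 := by
    intro h
    have := hy 0
    have h0 : (y - η) 0 = 0 := by rw [h]; rfl
    rw [hsub] at h0; linarith
  have hnorm : 0 < ‖y - η‖ := norm_pos_iff.mpr hne
  have hmax : ∀ m, max (y m - η m) 0 = y m - η m := fun m =>
    max_eq_left (by linarith [hy m])
  have hmem : ‖y - η‖⁻¹ • (y - η) ∈ Splus M := by
    constructor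
    · intro m
      have : (‖y - η‖⁻¹ • (y - η)) m = ‖y - η‖⁻¹ * (y m - η m) := rfl
      rw [this]
      exact mul_pos (inv_pos.mpr hnorm) (by linarith [hy m])
    · rw [norm_smul, norm_inv, norm_norm, inv_mul_cancel₀ hnorm.ne']
  refine ⟨hmem, ?_, ?_⟩
  · unfold sLen
    have : ∀ m : Fin M, max (y m - η m) 0 / (‖y - η‖⁻¹ • (y - η)) m = ‖y - η‖ := by
      intro m
      have hc : (‖y - η‖⁻¹ • (y - η)) m = ‖y - η‖⁻¹ * (y m - η m) := rfl
      rw [hmax, hc]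
      have hd : y m - η m ≠ 0 := by linarith [hy m]
      field_simp
    simp_rw [this]
    exact ciInf_const
  · rintro lam ⟨hpos, hlam⟩
    set c := sLen η lam y with hc
    have hbdd : BddBelow (Set.range fun m => max (y m - η m) 0 / lam m) :=
      Set.Finite.bddBelow (Set.finite_range _)
    have hcle : ∀ m, c ≤ (y m - η m) / lam m := by
      intro m
      have := ciInf_le hbdd m
      rwa [hmax] at this
    have hc0 : 0 ≤ c := le_ciInf fun m =>
      div_nonneg (le_max_right _ _) (hpos m).le
    have hcomp : ∀ m, c * lam m ≤ y m - η m := fun m =>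
      (le_div_iff₀ (hpos m)).mp (hcle m)
    have key : ‖c • lam‖ ≤ ‖y - η‖ := by
      rw [EuclideanSpace.norm_eq, EuclideanSpace.norm_eq]
      apply Real.sqrt_le_sqrt
      apply Finset.sum_le_sum
      intro m _
      have h1 : (c • lam) m = c * lam m := rfl
      rw [h1, hsub]
      simp only [Real.norm_eq_abs, sq_abs]
      have h2 : 0 ≤ c * lam m := mul_nonneg hc0 (hpos m).le
      have := hcomp m
      nlinarith
    calc c = ‖c • lam‖ := by rw [norm_smul, hlam, mul_one, Real.norm_eq_abs, abs_of_nonneg hc0]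
    _ ≤ ‖y - η‖ := key
end

section
/- Let η ∈ ℝ^M and let y strictly dominate η in every component. Then y lies in the truncated weak domination region of a Pareto front surface A* (i.e., there exists a ∈ A* with a ≥ y componentwise) if and only if ‖y − η‖₂ ≤ sup_{a ∈ A*} s_{η, λ*_η(y)}(a), where λ*_η(y) = (y − η)/‖y − η‖₂. -/
/-- domination equivalence, weak case: for a Pareto front surface `A`
with reference `η` and a vector `y` strictly dominating `η`, `y` lies in the truncated
weak domination region of `A` iff `‖y - η‖₂ ≤ ℓ_{η, λ*_η(y)}[A] = sup_{a ∈ A} s_{η, λ*_η(y)}(a)`,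
where `λ*_η(y) = (y - η)/‖y - η‖₂`. -/
theorem stmt3 (M : ℕ) (hM : 1 ≤ M) (η : EuclideanSpace ℝ (Fin M))
    (A : Set (EuclideanSpace ℝ (Fin M))) (hne : A.Nonempty)
    (hbdd : Bornology.IsBounded A)
    (hdom : ∀ a ∈ A, ∀ m, η m < a m)
    (hray : ∀ lam ∈ Splus M, ∃! t : ℝ, 0 < t ∧ η + t • lam ∈ A)
    (hpar : ∀ a ∈ A, ∀ b ∈ A, ¬ ∀ m, a m < b m)
    (y : EuclideanSpace ℝ (Fin M)) (hy : ∀ m, η m < y m) :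
    (∃ a ∈ A, ∀ m, y m ≤ a m) ↔
      ‖y - η‖ ≤ ⨆ a : A, sLen η (‖y - η‖⁻¹ • (y - η)) a := by
  haveI : Nonempty (Fin M) := ⟨⟨0, hM⟩⟩
  have hyne : y ≠ η := by
    intro h
    exact absurd (hy ⟨0, hM⟩) (by rw [h]; exact lt_irrefl _)
  set r := ‖y - η‖ with hrdef
  have hr : 0 < r := by
    rw [hrdef, norm_pos_iff, sub_ne_zero]; exact hyne
  set lam : EuclideanSpace ℝ (Fin M) := r⁻¹ • (y - η) with hlamdef
  have hlam_apply : ∀ m, lam m = r⁻¹ * (y m - η m) := by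
    intro m; rw [hlamdef]; simp [PiLp.smul_apply, PiLp.sub_apply]
  have hlam_pos : ∀ m, 0 < lam m := by
    intro m
    rw [hlam_apply]
    exact mul_pos (inv_pos.2 hr) (sub_pos.2 (hy m))
  have hylam : ∀ m, y m - η m = r * lam m := by
    intro m
    rw [hlam_apply]
    field_simp
  have hlamS : lam ∈ Splus M := by
    refine ⟨hlam_pos, ?_⟩
    rw [hlamdef, norm_smul, norm_inv, norm_norm]
    exact inv_mul_cancel₀ hr.ne'
  obtain ⟨t₀, ⟨ht₀pos, ha₀A⟩, _⟩ := hray lam hlamS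
  set a₀ : EuclideanSpace ℝ (Fin M) := η + t₀ • lam with ha₀def
  have ha₀_apply : ∀ m, a₀ m = η m + t₀ * lam m := by
    intro m; rw [ha₀def]; simp [PiLp.add_apply, PiLp.smul_apply]
  -- sLen of a point of A in terms of components
  have hsLen_eq : ∀ a : EuclideanSpace ℝ (Fin M), (∀ m, η m < a m) →
      sLen η lam a = ⨅ m, (a m - η m) / lam m := by
    intro a ha
    unfold sLen
    congr 1; funext m
    rw [max_eq_left (le_of_lt (sub_pos.2 (ha m)))]
  -- sLen of a₀ is t₀
  have hs_a₀ : sLen η lam a₀ = t₀ := by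
    rw [hsLen_eq a₀ (fun m => by rw [ha₀_apply]; nlinarith [hlam_pos m])]
    have : ∀ m : Fin M, (a₀ m - η m) / lam m = t₀ := by
      intro m
      rw [ha₀_apply, add_sub_cancel_left, mul_div_assoc, div_self (hlam_pos m).ne', mul_one]
    simp only [this]
    exact ciInf_const
  -- every sLen is ≤ t₀
  have key : ∀ a ∈ A, sLen η lam a ≤ t₀ := by
    intro a haA
    by_contra hlt
    push_neg at hlt
    have hbdb : BddBelow (Set.range fun m : Fin M => max (a m - η m) 0 / lam m) :=
      (Set.finite_range _).bddBelow
    apply hpar a₀ ha₀A a haA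
    intro m
    have h1 : t₀ < max (a m - η m) 0 / lam m := lt_of_lt_of_le hlt (ciInf_le hbdb m)
    have h2 : max (a m - η m) 0 = a m - η m :=
      max_eq_left (le_of_lt (sub_pos.2 (hdom a haA m)))
    rw [h2] at h1
    have h3 : t₀ * lam m < a m - η m := by
      rw [lt_div_iff₀ (hlam_pos m)] at h1
      linarith
    rw [ha₀_apply]
    linarith
  have hbddS : BddAbove (Set.range fun a : A => sLen η lam a) := by
    refine ⟨t₀, ?_⟩
    rintro x ⟨⟨a, haA⟩, rfl⟩
    exact key a haA
  have hsup : (⨆ a : A, sLen η lam a) = t₀ := by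
    haveI : Nonempty A := ⟨⟨_, ha₀A⟩⟩
    refine le_antisymm (ciSup_le fun a => key a a.2) ?_
    calc t₀ = sLen η lam a₀ := hs_a₀.symm
      _ ≤ _ := le_ciSup hbddS (⟨a₀, ha₀A⟩ : A)
  constructor
  · rintro ⟨a, haA, hya⟩
    have h1 : r ≤ sLen η lam a := by
      rw [hsLen_eq a (hdom a haA)]
      refine le_ciInf fun m => ?_
      rw [le_div_iff₀ (hlam_pos m)]
      have := hylam m
      have := hya m
      linarith
    calc r ≤ sLen η lam a := h1
      _ ≤ _ := le_ciSup hbddS (⟨a, haA⟩ : A)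
  · intro h
    rw [hsup] at h
    refine ⟨a₀, ha₀A, fun m => ?_⟩
    rw [ha₀_apply]
    have h1 := hylam m
    have h2 := hlam_pos m
    nlinarith
end

section
/- Let η ∈ ℝ^M and let y strictly dominate η in every component. Then there exists a ∈ A* with a^(m) > y^(m) for all m if and only if ‖y − η‖₂ < ℓ_{η, λ*_η(y)}[A*], where λ*_η(y) = (y − η)/‖y − η‖₂ and ℓ_{η,λ}[A*] = sup_{a ∈ A*} s_{η,λ}(a). -/
/-- domination equivalence, strict case: for a Pareto front surface `A`
with reference `η` and a vector `y` strictly dominating `η`, `y` lies in the truncated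
weak domination region of `A` strictly (all components) iff `‖y - η‖₂ < ℓ_{η, λ*_η(y)}[A] = sup_{a ∈ A} s_{η, λ*_η(y)}(a)`,
where `λ*_η(y) = (y - η)/‖y - η‖₂`. -/
theorem stmt4 (M : ℕ) (hM : 1 ≤ M) (η : EuclideanSpace ℝ (Fin M))
    (A : Set (EuclideanSpace ℝ (Fin M))) (hne : A.Nonempty)
    (hbdd : Bornology.IsBounded A)
    (hdom : ∀ a ∈ A, ∀ m, η m < a m)
    (hray : ∀ lam ∈ Splus M, ∃! t : ℝ, 0 < t ∧ η + t • lam ∈ A)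
    (hpar : ∀ a ∈ A, ∀ b ∈ A, ¬ ∀ m, a m < b m)
    (y : EuclideanSpace ℝ (Fin M)) (hy : ∀ m, η m < y m) :
    (∃ a ∈ A, ∀ m, y m < a m) ↔
      ‖y - η‖ < ⨆ a : A, sLen η (‖y - η‖⁻¹ • (y - η)) a := by
  have hMne : Nonempty (Fin M) := ⟨⟨0, hM⟩⟩
  set lam : EuclideanSpace ℝ (Fin M) := ‖y - η‖⁻¹ • (y - η) with hlamdef
  have hsub : ∀ m, (y - η) m = y m - η m := fun m => rfl
  have hyne : y - η ≠ 0 := by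
    intro h
    have h0 : (y - η) ⟨0, hM⟩ = 0 := by rw [h]; rfl
    rw [hsub] at h0
    have := hy ⟨0, hM⟩
    linarith
  have hr : 0 < ‖y - η‖ := norm_pos_iff.mpr hyne
  have hlamapp : ∀ m, lam m = ‖y - η‖⁻¹ * (y m - η m) := by
    intro m
    rw [hlamdef]
    simp [hsub m]
  have hlampos : ∀ m, 0 < lam m := by
    intro m
    rw [hlamapp]
    exact mul_pos (inv_pos.mpr hr) (by linarith [hy m])
  have hlamnorm : ‖lam‖ = 1 := by
    rw [hlamdef, norm_smul, norm_inv, norm_norm, inv_mul_cancel₀ hr.ne']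
  obtain ⟨t₀, ⟨ht0, ha0⟩, huniq⟩ := hray lam ⟨hlampos, hlamnorm⟩
  set a₀ : EuclideanSpace ℝ (Fin M) := η + t₀ • lam with ha0def
  have ha0app : ∀ m, a₀ m = η m + t₀ * lam m := fun m => rfl
  have hym : ∀ m, y m - η m = ‖y - η‖ * lam m := by
    intro m
    rw [hlamapp]
    field_simp
  -- each term of sLen is nonneg
  have hbb : ∀ a : EuclideanSpace ℝ (Fin M),
      BddBelow (Set.range fun m => max (a m - η m) 0 / lam m) := by
    intro a
    refine ⟨0, ?_⟩
    rintro _ ⟨m, rfl⟩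
    exact div_nonneg (le_max_right _ _) (hlampos m).le
  have ha_le : ∀ a ∈ A, sLen η lam a ≤ t₀ := by
    intro a ha
    have := hpar a₀ ha0 a ha
    push_neg at this
    obtain ⟨m, hm⟩ := this
    have h1 : sLen η lam a ≤ max (a m - η m) 0 / lam m := ciInf_le (hbb a) m
    have h2 : max (a m - η m) 0 = a m - η m :=
      max_eq_left (by linarith [hdom a ha m])
    have h3 : a m - η m ≤ t₀ * lam m := by
      rw [ha0app] at hm; linarith
    calc sLen η lam a ≤ (a m - η m) / lam m := by rw [h2] at h1; exact h1
      _ ≤ (t₀ * lam m) / lam m := by gcongr; exact (hlampos m).le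
      _ = t₀ := mul_div_cancel_right₀ _ (hlampos m).ne'
  have hs0 : sLen η lam a₀ = t₀ := by
    have : ∀ m : Fin M, max (a₀ m - η m) 0 / lam m = t₀ := by
      intro m
      rw [ha0app, max_eq_left (by nlinarith [mul_pos ht0 (hlampos m)])]
      have h4 : η m + t₀ * lam m - η m = t₀ * lam m := by ring
      rw [h4, mul_div_cancel_right₀ _ (hlampos m).ne']
    unfold sLen
    simp only [this]
    exact ciInf_const
  haveI : Nonempty A := ⟨⟨a₀, ha0⟩⟩
  have hbdd2 : BddAbove (Set.range fun a : A => sLen η lam a) := by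
    refine ⟨t₀, ?_⟩
    rintro _ ⟨a, rfl⟩
    exact ha_le a a.2
  have hsup : (⨆ a : A, sLen η lam a) = t₀ := by
    apply le_antisymm
    · exact ciSup_le fun a => ha_le a a.2
    · have := le_ciSup hbdd2 (⟨a₀, ha0⟩ : A)
      rwa [hs0] at this
  rw [hsup]
  constructor
  · rintro ⟨a, ha, hya⟩
    have hlt : ‖y - η‖ < sLen η lam a := by
      obtain ⟨m, hm⟩ := exists_eq_ciInf_of_finite
        (f := fun m => max (a m - η m) 0 / lam m)
      have h2 : max (a m - η m) 0 = a m - η m :=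
        max_eq_left (by linarith [hdom a ha m])
      have h3 : ‖y - η‖ * lam m < a m - η m := by
        have := hya m
        rw [← hym m]; linarith
      have : ‖y - η‖ < (a m - η m) / lam m :=
        (lt_div_iff₀ (hlampos m)).mpr h3
      unfold sLen
      rw [← hm, h2]
      exact this
    linarith [ha_le a ha]
  · intro hlt
    refine ⟨a₀, ha0, fun m => ?_⟩
    rw [ha0app]
    have := hym m
    have hmul : ‖y - η‖ * lam m < t₀ * lam m :=
      mul_lt_mul_of_pos_right hlt (hlampos m)
    linarith
end

section
/- For a single point a strictly dominating η in all components, the interpolated weak Pareto front of the singleton {a} truncated at η equals the polar surface {η + s_{η,λ}(a) λ : λ ∈ S^{M−1}_+}. -/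
/-- The weak Pareto domination region `D_⪯[A]` of a set `A`. -/
def weakDom {M : ℕ} (A : Set (EuclideanSpace ℝ (Fin M))) : Set (EuclideanSpace ℝ (Fin M)) :=
  {y | ∃ a ∈ A, ∀ m, y m ≤ a m}

/-- The interpolated weak Pareto front of `A` truncated at `η`: the points of the closure of
the weak domination region of `A` that are not strongly dominated by any point of that region,
intersected with the region strictly dominating `η`. -/
def truncFront {M : ℕ} (η : EuclideanSpace ℝ (Fin M)) (A : Set (EuclideanSpace ℝ (Fin M))) :
    Set (EuclideanSpace ℝ (Fin M)) :=
  {y ∈ closure (weakDom A) | ∀ z ∈ closure (weakDom A), ¬ ∀ m, y m < z m} ∩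
    {y | ∀ m, η m < y m}

lemma closure_weakDom_singleton {M : ℕ} (a : EuclideanSpace ℝ (Fin M)) :
    closure (weakDom {a}) = {y | ∀ m, y m ≤ a m} := by
  have h1 : weakDom {a} = {y : EuclideanSpace ℝ (Fin M) | ∀ m, y m ≤ a m} := by
    ext y; simp [weakDom]
  have h2 : IsClosed {y : EuclideanSpace ℝ (Fin M) | ∀ m, y m ≤ a m} := by
    have : {y : EuclideanSpace ℝ (Fin M) | ∀ m, y m ≤ a m} =
        ⋂ m, {y : EuclideanSpace ℝ (Fin M) | y m ≤ a m} := by ext y; simp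
    rw [this]
    exact isClosed_iInter fun m =>
      isClosed_le (EuclideanSpace.proj (𝕜 := ℝ) m).continuous continuous_const
  rw [h1, h2.closure_eq]

/-- for a single point `a` strictly dominating `η`, the truncated interpolated
weak Pareto front of the singleton `{a}` equals the polar surface
`{η + s_{η,λ}(a) • λ : λ ∈ S^{M-1}_+}`. -/
theorem stmt5 (M : ℕ) (hM : 1 ≤ M) (η a : EuclideanSpace ℝ (Fin M))
    (ha : ∀ m, η m < a m) :
    truncFront η {a} = {y | ∃ lam ∈ Splus M, y = η + sLen η lam a • lam} := by
  haveI : Nonempty (Fin M) := ⟨⟨0, hM⟩⟩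
  ext y
  constructor
  · rintro ⟨⟨hyc, hnd⟩, hy⟩
    rw [closure_weakDom_singleton] at hyc
    have hya : ∃ m, y m = a m := by
      by_contra h
      push_neg at h
      refine hnd a (by rw [closure_weakDom_singleton]; exact fun m => le_refl _) (fun m => ?_)
      exact lt_of_le_of_ne (hyc m) (h m)
    obtain ⟨m0, hm0⟩ := hya
    -- construct lam
    set v : EuclideanSpace ℝ (Fin M) := y - η with hv
    have hvm : ∀ m, 0 < v m := fun m => by simp [hv, sub_pos, hy m]
    have hvne : v ≠ 0 := by
      intro h
      have := hvm ⟨0, hM⟩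
      rw [h] at this
      simp at this
    have hc : 0 < ‖v‖ := norm_pos_iff.mpr hvne
    set lam : EuclideanSpace ℝ (Fin M) := ‖v‖⁻¹ • v with hlam
    have hlamm : ∀ m, lam m = ‖v‖⁻¹ * v m := fun m => rfl
    have hlampos : ∀ m, 0 < lam m := fun m => by
      rw [hlamm]; exact mul_pos (inv_pos.mpr hc) (hvm m)
    refine ⟨lam, ⟨hlampos, norm_smul_inv_norm hvne⟩, ?_⟩
    -- compute sLen η lam a = ‖v‖
    have hs : sLen η lam a = ‖v‖ := by
      unfold sLen
      apply le_antisymm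
      · refine ciInf_le_of_le (Finite.bddBelow_range _) m0 ?_
        have ht : 0 < v m0 := hvm m0
        have : max (a m0 - η m0) 0 = v m0 := by
          rw [max_eq_left (le_of_lt (sub_pos.mpr (ha m0))), ← hm0]; rfl
        rw [this, hlamm]
        rw [div_le_iff₀ (mul_pos (inv_pos.mpr hc) ht)]
        field_simp
        exact le_refl _
      · refine le_ciInf fun m => ?_
        have ht : 0 < v m := hvm m
        have hvle : v m ≤ a m - η m := by
          have : v m = y m - η m := rfl
          rw [this]; exact sub_le_sub_right (hyc m) _
        have : max (a m - η m) 0 = a m - η m :=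
          max_eq_left (le_of_lt (sub_pos.mpr (ha m)))
        rw [this, hlamm, le_div_iff₀ (mul_pos (inv_pos.mpr hc) ht)]
        calc ‖v‖ * (‖v‖⁻¹ * v m) = v m := by field_simp
          _ ≤ a m - η m := hvle
    rw [hs, hlam, smul_inv_smul₀ (ne_of_gt hc)]
    ext m
    simp [hv]
  · rintro ⟨lam, ⟨hlampos, _⟩, rfl⟩
    have hterm : ∀ m, max (a m - η m) 0 / lam m = (a m - η m) / lam m := fun m => by
      rw [max_eq_left (le_of_lt (sub_pos.mpr (ha m)))]
    have hs : sLen η lam a = ⨅ m, (a m - η m) / lam m := by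
      unfold sLen; exact iInf_congr hterm
    obtain ⟨m0, hm0⟩ := Finite.exists_min (fun m => (a m - η m) / lam m)
    have hseq : sLen η lam a = (a m0 - η m0) / lam m0 := by
      rw [hs]
      exact le_antisymm (ciInf_le (Finite.bddBelow_range _) m0) (le_ciInf hm0)
    have hspos : 0 < sLen η lam a := by
      rw [hseq]
      exact div_pos (sub_pos.mpr (ha m0)) (hlampos m0)
    set s := sLen η lam a with hsdef
    have hcoord : ∀ m, (η + s • lam) m = η m + s * lam m := fun m => rfl
    have hle : ∀ m, (η + s • lam) m ≤ a m := by
      intro m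
      rw [hcoord]
      have : s ≤ (a m - η m) / lam m := hseq ▸ hm0 m
      have := (le_div_iff₀ (hlampos m)).mp this
      linarith
    have heq0 : (η + s • lam) m0 = a m0 := by
      rw [hcoord, hseq, div_mul_cancel₀ _ (ne_of_gt (hlampos m0))]
      ring
    refine ⟨⟨?_, ?_⟩, ?_⟩
    · rw [closure_weakDom_singleton]; exact hle
    · intro z hz hlt
      rw [closure_weakDom_singleton] at hz
      exact absurd (lt_of_lt_of_le (hlt m0) (hz m0)) (by rw [heq0]; exact lt_irrefl _)
    · intro m
      rw [hcoord]
      have : 0 < s * lam m := mul_pos hspos (hlampos m)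
      linarith
end

section
/- A polar surface A (a subset of the region strictly dominating η such that each positive ray from η meets A exactly once, with projected length function ℓ_{η,λ}[A]) is a valid Pareto front surface (i.e., equal to its own truncated interpolated weak Pareto front) if and only if (C1) ℓ_{η,λ}[A] > 0 for all positive unit vectors λ, and (C2) max_{m} (ℓ_{η,λ}[A] λ^(m)) / (ℓ_{η,υ}[A] υ^(m)) ≥ 1 for all positive unit vectors λ, υ. -/
/-- `A` is a polar surface with reference `η`: it lies in the region strictly dominating
`η` (union `{η}`), and each line `{η + t • λ : t ∈ ℝ}` with `λ` a positive unit vector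
meets `A` in exactly one point. -/
def IsPolarSurface {M : ℕ} (η : EuclideanSpace ℝ (Fin M))
    (A : Set (EuclideanSpace ℝ (Fin M))) : Prop :=
  (∀ a ∈ A, (∀ m, η m < a m) ∨ a = η) ∧
  ∀ lam ∈ Splus M, ∃! y, y ∈ A ∧ ∃ t : ℝ, y = η + t • lam

/-- The projected length `ℓ_{η,λ}[A]`: the distance from `η` of the intersection of `A`
with the ray `{η + t • λ : t > 0}`. -/
noncomputable def projLen {M : ℕ} (η : EuclideanSpace ℝ (Fin M))
    (A : Set (EuclideanSpace ℝ (Fin M))) (lam : EuclideanSpace ℝ (Fin M)) : ℝ :=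
  sSup {t : ℝ | 0 < t ∧ η + t • lam ∈ A}

lemma splus_ne_zero {M : ℕ} {lam : EuclideanSpace ℝ (Fin M)} (h : lam ∈ Splus M) :
    lam ≠ 0 := by
  intro h0
  rw [h0] at h
  simpa using h.2

lemma proj_unique {M : ℕ} {η : EuclideanSpace ℝ (Fin M)} {A : Set (EuclideanSpace ℝ (Fin M))}
    (hA : IsPolarSurface η A) {lam : EuclideanSpace ℝ (Fin M)} (hl : lam ∈ Splus M)
    {s t : ℝ} (hs : η + s • lam ∈ A) (ht : η + t • lam ∈ A) : s = t := by
  obtain ⟨y, _, huniq⟩ := hA.2 lam hl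
  have h1 : η + s • lam = y := huniq _ ⟨hs, s, rfl⟩
  have h2 : η + t • lam = y := huniq _ ⟨ht, t, rfl⟩
  have h3 : s • lam = t • lam := by
    have h := h1.trans h2.symm
    exact add_left_cancel h
  exact smul_left_injective ℝ (splus_ne_zero hl) h3

lemma projLen_eq {M : ℕ} {η : EuclideanSpace ℝ (Fin M)} {A : Set (EuclideanSpace ℝ (Fin M))}
    (hA : IsPolarSurface η A) {lam : EuclideanSpace ℝ (Fin M)} (hl : lam ∈ Splus M)
    {t : ℝ} (ht : 0 < t) (hmem : η + t • lam ∈ A) : projLen η A lam = t := by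
  have hset : {s : ℝ | 0 < s ∧ η + s • lam ∈ A} = {t} := by
    ext s
    simp only [Set.mem_setOf_eq, Set.mem_singleton_iff]
    constructor
    · rintro ⟨_, hsA⟩
      exact proj_unique hA hl hsA hmem
    · rintro rfl
      exact ⟨ht, hmem⟩
  rw [projLen, hset, csSup_singleton]

lemma projLen_of_eta {M : ℕ} {η : EuclideanSpace ℝ (Fin M)} {A : Set (EuclideanSpace ℝ (Fin M))}
    (hA : IsPolarSurface η A) (hη : η ∈ A) {lam : EuclideanSpace ℝ (Fin M)}
    (hl : lam ∈ Splus M) : projLen η A lam = 0 := by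
  have hset : {s : ℝ | 0 < s ∧ η + s • lam ∈ A} = ∅ := by
    ext s
    simp only [Set.mem_setOf_eq, Set.mem_empty_iff_false, iff_false, not_and]
    intro hs hsA
    have h0 : η + (0:ℝ) • lam ∈ A := by simpa using hη
    exact hs.ne' (proj_unique hA hl hsA h0)
  rw [projLen, hset, Real.sSup_empty]

lemma splus_nonempty (M : ℕ) (hM : 1 ≤ M) : ∃ lam, lam ∈ Splus M := by
  have hM0 : (0:ℝ) < M := by exact_mod_cast hM
  have hs : (0:ℝ) < Real.sqrt M := Real.sqrt_pos.2 hM0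
  refine ⟨WithLp.toLp 2 (fun _ => (Real.sqrt M)⁻¹ : ∀ _ : Fin M, ℝ), fun m => inv_pos.2 hs, ?_⟩
  rw [EuclideanSpace.norm_eq]
  simp only [PiLp.toLp_apply]
  have : ∀ m : Fin M, ‖(Real.sqrt M)⁻¹‖ ^ 2 = (M:ℝ)⁻¹ := by
    intro m
    rw [Real.norm_eq_abs, abs_of_pos (inv_pos.2 hs), inv_pow, Real.sq_sqrt hM0.le]
  rw [Finset.sum_congr rfl (fun m _ => this m), Finset.sum_const, Finset.card_univ,
    Fintype.card_fin, nsmul_eq_mul, mul_inv_cancel₀ (ne_of_gt hM0), Real.sqrt_one]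

/-- Direction vector of a strictly dominating point lies in `Splus`. -/
lemma dir_mem_splus {M : ℕ} {η a : EuclideanSpace ℝ (Fin M)} (h : ∀ m, η m < a m)
    (hM : 1 ≤ M) : ‖a - η‖⁻¹ • (a - η) ∈ Splus M := by
  have hne : a - η ≠ 0 := by
    intro h0
    have := h ⟨0, hM⟩
    have h1 : a ⟨0, hM⟩ - η ⟨0, hM⟩ = 0 := by
      have : (a - η) ⟨0, hM⟩ = 0 := by rw [h0]; rfl
      simpa using this
    linarith
  have hn : (0:ℝ) < ‖a - η‖ := norm_pos_iff.2 hne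
  constructor
  · intro m
    have : (‖a - η‖⁻¹ • (a - η)) m = ‖a - η‖⁻¹ * (a m - η m) := by
      simp [PiLp.smul_apply, PiLp.sub_apply, smul_eq_mul]
    rw [this]
    exact mul_pos (inv_pos.2 hn) (sub_pos.2 (h m))
  · exact norm_smul_inv_norm hne

/-- Pareto front conditions: a polar surface `A` is a valid Pareto front
surface (all its points strictly dominate `η` and no point of `A` strongly dominates
another) if and only if (C1) all projected lengths are positive and (C2) the maximum
ratio condition holds for all pairs of positive unit vectors. -/
theorem stmt7 (M : ℕ) (hM : 1 ≤ M) (η : EuclideanSpace ℝ (Fin M))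
    (A : Set (EuclideanSpace ℝ (Fin M))) (hA : IsPolarSurface η A) :
    ((∀ a ∈ A, ∀ m, η m < a m) ∧ ∀ a ∈ A, ∀ b ∈ A, ¬ ∀ m, a m < b m) ↔
      ((∀ lam ∈ Splus M, 0 < projLen η A lam) ∧
        ∀ lam ∈ Splus M, ∀ ups ∈ Splus M,
          1 ≤ ⨆ m, (projLen η A lam * lam m) / (projLen η A ups * ups m)) := by
  haveI : Nonempty (Fin M) := ⟨⟨0, hM⟩⟩
  -- key: for `lam ∈ Splus M`, if all points of `A` strictly dominate η,
  -- the intersection parameter is positive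
  have key : (∀ a ∈ A, ∀ m, η m < a m) → ∀ lam ∈ Splus M,
      ∃ t : ℝ, 0 < t ∧ η + t • lam ∈ A ∧ projLen η A lam = t := by
    intro hdom lam hl
    obtain ⟨y, ⟨hyA, t, rfl⟩, _⟩ := hA.2 lam hl
    have hm : η ⟨0, hM⟩ < (η + t • lam) ⟨0, hM⟩ := hdom _ hyA ⟨0, hM⟩
    have happ : (η + t • lam) ⟨0, hM⟩ = η ⟨0, hM⟩ + t * lam ⟨0, hM⟩ := by
      simp [PiLp.add_apply, PiLp.smul_apply, smul_eq_mul]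
    rw [happ] at hm
    have ht : 0 < t := by
      by_contra hn
      push_neg at hn
      have := mul_nonpos_of_nonpos_of_nonneg hn (hl.1 ⟨0, hM⟩).le
      linarith
    exact ⟨t, ht, hyA, projLen_eq hA hl ht hyA⟩
  constructor
  · rintro ⟨hdom, hpar⟩
    have hC1 : ∀ lam ∈ Splus M, 0 < projLen η A lam := by
      intro lam hl
      obtain ⟨t, ht, _, hproj⟩ := key hdom lam hl
      rw [hproj]; exact ht
    refine ⟨hC1, ?_⟩
    intro lam hl ups hu
    obtain ⟨s, hs, hsA, hsproj⟩ := key hdom lam hl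
    obtain ⟨t, ht, htA, htproj⟩ := key hdom ups hu
    have hnd := hpar _ hsA _ htA
    push_neg at hnd
    obtain ⟨m, hm⟩ := hnd
    have hm' : t * ups m ≤ s * lam m := by
      have ha : (η + s • lam) m = η m + s * lam m := by
        simp [PiLp.add_apply, PiLp.smul_apply, smul_eq_mul]
      have hb : (η + t • ups) m = η m + t * ups m := by
        simp [PiLp.add_apply, PiLp.smul_apply, smul_eq_mul]
      rw [ha, hb] at hm
      linarith
    have hpos : 0 < t * ups m := mul_pos ht (hu.1 m)
    have hratio : (1:ℝ) ≤ projLen η A lam * lam m / (projLen η A ups * ups m) := by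
      rw [hsproj, htproj]
      exact (one_le_div hpos).2 hm'
    exact le_ciSup_of_le (Set.Finite.bddAbove (Set.finite_range _)) m hratio
  · rintro ⟨hC1, hC2⟩
    have hηnot : η ∉ A := by
      intro hη
      obtain ⟨lam, hl⟩ := splus_nonempty M hM
      have := hC1 lam hl
      rw [projLen_of_eta hA hη hl] at this
      exact lt_irrefl 0 this
    have hdom : ∀ a ∈ A, ∀ m, η m < a m := by
      intro a ha
      rcases hA.1 a ha with h | h
      · exact h
      · exact absurd (h ▸ ha) hηnot
    refine ⟨hdom, ?_⟩
    intro a ha b hb hab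
    have hda := hdom a ha
    have hdb := hdom b hb
    set lam := ‖a - η‖⁻¹ • (a - η) with hlamdef
    set ups := ‖b - η‖⁻¹ • (b - η) with hupsdef
    have hl : lam ∈ Splus M := dir_mem_splus hda hM
    have hu : ups ∈ Splus M := dir_mem_splus hdb hM
    have hna : (0:ℝ) < ‖a - η‖ := by
      rw [norm_pos_iff]
      intro h0
      have := hda ⟨0, hM⟩
      have h1 : (a - η) ⟨0, hM⟩ = 0 := by rw [h0]; rfl
      simp only [PiLp.sub_apply] at h1
      linarith
    have hnb : (0:ℝ) < ‖b - η‖ := by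
      rw [norm_pos_iff]
      intro h0
      have := hdb ⟨0, hM⟩
      have h1 : (b - η) ⟨0, hM⟩ = 0 := by rw [h0]; rfl
      simp only [PiLp.sub_apply] at h1
      linarith
    have haeq : a = η + ‖a - η‖ • lam := by
      rw [hlamdef, smul_smul, mul_inv_cancel₀ hna.ne', one_smul]
      abel
    have hbeq : b = η + ‖b - η‖ • ups := by
      rw [hupsdef, smul_smul, mul_inv_cancel₀ hnb.ne', one_smul]
      abel
    have hpa : projLen η A lam = ‖a - η‖ := projLen_eq hA hl hna (haeq ▸ ha)
    have hpb : projLen η A ups = ‖b - η‖ := projLen_eq hA hu hnb (hbeq ▸ hb)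
    have hlt : ∀ m, projLen η A lam * lam m / (projLen η A ups * ups m) < 1 := by
      intro m
      have hla : projLen η A lam * lam m = a m - η m := by
        rw [hpa, hlamdef]
        simp only [PiLp.smul_apply, PiLp.sub_apply, smul_eq_mul]
        field_simp
      have hlb : projLen η A ups * ups m = b m - η m := by
        rw [hpb, hupsdef]
        simp only [PiLp.smul_apply, PiLp.sub_apply, smul_eq_mul]
        field_simp
      rw [hla, hlb]
      have hbpos : 0 < b m - η m := sub_pos.2 (hdb m)
      exact (div_lt_one hbpos).2 (by linarith [hab m])
    obtain ⟨m0, hm0⟩ := Finite.exists_max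
      (fun m => projLen η A lam * lam m / (projLen η A ups * ups m))
    have hsup : (⨆ m, projLen η A lam * lam m / (projLen η A ups * ups m)) < 1 :=
      lt_of_le_of_lt (ciSup_le hm0) (hlt m0)
    exact absurd (hC2 lam hl ups hu) (not_le.2 hsup)
end

section
/- The set of Pareto front surfaces with reference η is closed under the length-wise addition operation: if A*, B* are Pareto front surfaces, then A* ⊕ B* := {η + (ℓ_{η,λ}[A*] + ℓ_{η,λ}[B*]) λ : λ ∈ S^{M−1}_+} is again a Pareto front surface. -/
/-- `A` is a Pareto front surface with reference `η`: it lies strictly above `η`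
componentwise, each positive ray from `η` meets `A` exactly once, the projected lengths
are positive, and the maximum ratio condition holds. -/
def IsParetoFrontSurface {M : ℕ} (η : EuclideanSpace ℝ (Fin M))
    (A : Set (EuclideanSpace ℝ (Fin M))) : Prop :=
  (∀ a ∈ A, ∀ m, η m < a m) ∧
  (∀ lam ∈ Splus M, ∃! t : ℝ, 0 < t ∧ η + t • lam ∈ A) ∧
  (∀ lam ∈ Splus M, 0 < projLen η A lam) ∧
  (∀ lam ∈ Splus M, ∀ ups ∈ Splus M,
    1 ≤ ⨆ m, (projLen η A lam * lam m) / (projLen η A ups * ups m))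

/-- Uniqueness of ray representation. -/
lemma ray_unique {M : ℕ} {s t : ℝ} {lam ups : EuclideanSpace ℝ (Fin M)}
    (hlam : lam ∈ Splus M) (hups : ups ∈ Splus M) (hs : 0 < s) (ht : 0 < t)
    (h : s • lam = t • ups) : s = t ∧ lam = ups := by
  have hn : ‖s • lam‖ = ‖t • ups‖ := by rw [h]
  rw [norm_smul, norm_smul, hlam.2, hups.2, Real.norm_eq_abs, Real.norm_eq_abs,
    abs_of_pos hs, abs_of_pos ht, mul_one, mul_one] at hn
  subst hn
  exact ⟨rfl, smul_right_injective _ (ne_of_gt hs) h⟩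

/-- length-wise addition: Pareto front surfaces are closed under the
operation `A ⊕ B = {η + (ℓ_{η,λ}[A] + ℓ_{η,λ}[B]) • λ : λ ∈ S^{M-1}_+}`. -/
theorem stmt9 (M : ℕ) (hM : 1 ≤ M) (η : EuclideanSpace ℝ (Fin M))
    (A B : Set (EuclideanSpace ℝ (Fin M)))
    (hA : IsParetoFrontSurface η A) (hB : IsParetoFrontSurface η B) :
    IsParetoFrontSurface η
      {y | ∃ lam ∈ Splus M, y = η + (projLen η A lam + projLen η B lam) • lam} := by
  obtain ⟨hA1, hA2, hA3, hA4⟩ := hA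
  obtain ⟨hB1, hB2, hB3, hB4⟩ := hB
  haveI : Nonempty (Fin M) := ⟨⟨0, hM⟩⟩
  set C : Set (EuclideanSpace ℝ (Fin M)) :=
    {y | ∃ lam ∈ Splus M, y = η + (projLen η A lam + projLen η B lam) • lam} with hCdef
  have hpos : ∀ lam ∈ Splus M, 0 < projLen η A lam + projLen η B lam := fun lam hl =>
    add_pos (hA3 lam hl) (hB3 lam hl)
  have hmem : ∀ lam ∈ Splus M, η + (projLen η A lam + projLen η B lam) • lam ∈ C :=
    fun lam hl => ⟨lam, hl, rfl⟩
  have huniq : ∀ lam ∈ Splus M, ∀ t : ℝ, 0 < t → η + t • lam ∈ C →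
      t = projLen η A lam + projLen η B lam := by
    intro lam hl t ht hm
    obtain ⟨ups, hups, heq⟩ := hm
    have h' : t • lam = (projLen η A ups + projLen η B ups) • ups := add_left_cancel heq
    obtain ⟨h1, h2⟩ := ray_unique hl hups ht (hpos ups hups) h'
    rw [h1, h2]
  have hproj : ∀ lam ∈ Splus M, projLen η C lam = projLen η A lam + projLen η B lam := by
    intro lam hl
    have hset : {t : ℝ | 0 < t ∧ η + t • lam ∈ C}
        = {projLen η A lam + projLen η B lam} := by
      ext t
      constructor
      · rintro ⟨ht, hm⟩
        exact huniq lam hl t ht hm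
      · rintro rfl
        exact ⟨hpos lam hl, hmem lam hl⟩
    rw [projLen, hset, csSup_singleton]
  refine ⟨?_, ?_, ?_, ?_⟩
  · rintro a ⟨lam, hl, rfl⟩ m
    have h1 := mul_pos (hpos lam hl) (hl.1 m)
    simp only [PiLp.add_apply, PiLp.smul_apply, smul_eq_mul]
    linarith
  · intro lam hl
    exact ⟨projLen η A lam + projLen η B lam, ⟨hpos lam hl, hmem lam hl⟩,
      fun t ⟨ht, hm⟩ => huniq lam hl t ht hm⟩
  · intro lam hl
    rw [hproj lam hl]
    exact hpos lam hl
  · intro lam hl ups hu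
    rw [hproj lam hl, hproj ups hu]
    obtain ⟨mstar, hmstar⟩ := Finite.exists_max (fun m => lam m / ups m)
    have key : ∀ a a' : ℝ, 0 < a → 0 < a' →
        (1 ≤ ⨆ m, (a * lam m) / (a' * ups m)) → a' * ups mstar ≤ a * lam mstar := by
      intro a a' ha ha' hsup
      have hbound : ∀ m, (a * lam m) / (a' * ups m) ≤ (a * lam mstar) / (a' * ups mstar) := by
        intro m
        rw [mul_div_mul_comm, mul_div_mul_comm]
        exact mul_le_mul_of_nonneg_left (hmstar m) (le_of_lt (div_pos ha ha'))
      have h1 : 1 ≤ (a * lam mstar) / (a' * ups mstar) :=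
        le_trans hsup (ciSup_le hbound)
      have hden : 0 < a' * ups mstar := mul_pos ha' (hu.1 mstar)
      have h2 := (le_div_iff₀ hden).mp h1
      linarith
    have hAkey := key _ _ (hA3 lam hl) (hA3 ups hu) (hA4 lam hl ups hu)
    have hBkey := key _ _ (hB3 lam hl) (hB3 ups hu) (hB4 lam hl ups hu)
    have hval : 1 ≤ ((projLen η A lam + projLen η B lam) * lam mstar) /
        ((projLen η A ups + projLen η B ups) * ups mstar) := by
      rw [le_div_iff₀ (mul_pos (hpos ups hu) (hu.1 mstar)), one_mul]
      nlinarith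
    exact le_trans hval (le_ciSup (f := fun m =>
      ((projLen η A lam + projLen η B lam) * lam m) /
        ((projLen η A ups + projLen η B ups) * ups m))
      (Set.Finite.bddAbove (Set.finite_range _)) mstar)
end

section
/- Strict Pareto compliancy of length-based R2 utilities: let η ∈ ℝ^M and τ : ℝ_{≥0} → ℝ be strictly increasing. Define U_{η,τ}[Y] = E_{λ ~ Uniform(S^{M−1}_+)}[max_{y∈Y} τ(s_{η,λ}(y))] for finite Y ⊂ ℝ^M. If A, B are finite subsets of the strictly dominating region of η and A strictly dominates B as sets (the weak domination region of A strictly contains that of B), then U_{η,τ}[A] > U_{η,τ}[B]. -/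
open MeasureTheory

/-- The length-based R2 utility `U_{η,τ}[Y]`: the expectation, under the uniform
(normalised surface) measure on `S^{M-1}_+`, of `max_{y ∈ Y} τ(s_{η,λ}(y))`. -/
noncomputable def lenUtility {M : ℕ} (η : EuclideanSpace ℝ (Fin M)) (τ : ℝ → ℝ)
    (Y : Finset (EuclideanSpace ℝ (Fin M))) (hY : Y.Nonempty) : ℝ :=
  ⨍ lam in Splus M, Y.sup' hY (fun y => τ (sLen η lam y)) ∂(μH[(M : ℝ) - 1])

namespace Stmt11Aux

open scoped NNReal ENNReal

variable {N : ℕ}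

/-! ### Elementary properties of `sLen` -/

lemma sLen_le (η lam y : EuclideanSpace ℝ (Fin (N+1))) (m : Fin (N+1)) :
    sLen η lam y ≤ max (y m - η m) 0 / lam m :=
  ciInf_le (Set.Finite.bddBelow (Set.finite_range _)) m

lemma le_sLen (η lam y : EuclideanSpace ℝ (Fin (N+1))) {c : ℝ}
    (h : ∀ m, c ≤ max (y m - η m) 0 / lam m) : c ≤ sLen η lam y :=
  le_ciInf h

lemma sLen_nonneg (η lam y : EuclideanSpace ℝ (Fin (N+1))) (hlam : ∀ m, 0 < lam m) :
    0 ≤ sLen η lam y :=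
  le_sLen _ _ _ fun m => div_nonneg (le_max_right _ _) (hlam m).le

lemma sLen_mono (η lam y y' : EuclideanSpace ℝ (Fin (N+1))) (hlam : ∀ m, 0 < lam m)
    (h : ∀ m, y m ≤ y' m) : sLen η lam y ≤ sLen η lam y' :=
  le_sLen _ _ _ fun m => (sLen_le η lam y m).trans <|
    (div_le_div_iff_of_pos_right (hlam m)).mpr (max_le_max (sub_le_sub_right (h m) _) le_rfl)

lemma coord_eval_continuous (m : Fin (N+1)) :
    Continuous (fun z : EuclideanSpace ℝ (Fin (N+1)) => z m) :=
  (continuous_apply m).comp (PiLp.continuous_ofLp (p := 2) (β := fun _ : Fin (N+1) => ℝ))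

lemma sLen_continuousOn (η y : EuclideanSpace ℝ (Fin (N+1))) :
    ContinuousOn (fun lam => sLen η lam y) {lam | ∀ m, 0 < lam m} := by
  have h : ∀ lam : EuclideanSpace ℝ (Fin (N+1)), sLen η lam y
      = Finset.univ.inf' Finset.univ_nonempty (fun m => max (y m - η m) 0 / lam m) := by
    intro lam; rw [sLen, ← Finset.inf'_univ_eq_ciInf]
  simp only [h]
  apply ContinuousOn.finset_inf'_apply Finset.univ_nonempty
  intro m _
  exact ContinuousOn.div continuousOn_const (coord_eval_continuous m).continuousOn
    (fun lam hlam => (hlam m).ne')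

lemma sLen_measurable (η y : EuclideanSpace ℝ (Fin (N+1))) :
    Measurable (fun lam => sLen η lam y) := by
  have h : ∀ lam : EuclideanSpace ℝ (Fin (N+1)), sLen η lam y
      = Finset.univ.inf' Finset.univ_nonempty (fun m => max (y m - η m) 0 / lam m) := by
    intro lam; rw [sLen, ← Finset.inf'_univ_eq_ciInf]
  simp only [h]
  have : Measurable (Finset.univ.inf' (Finset.univ_nonempty (α := Fin (N+1)))
      (fun m (lam : EuclideanSpace ℝ (Fin (N+1))) => max (y m - η m) 0 / lam m)) := by
    apply Finset.inf'_induction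
    · exact fun f hf g hg => hf.inf hg
    · exact fun m _ => measurable_const.div (coord_eval_continuous m).measurable
  convert this using 1
  ext lam
  simp [Finset.inf'_apply]

/-! ### The distinguished direction -/

section dir

variable (η a : EuclideanSpace ℝ (Fin (N+1)))

lemma norm_sub_pos' (ha : ∀ m, η m < a m) : 0 < ‖a - η‖ := by
  rw [norm_pos_iff, sub_ne_zero]
  intro h
  exact absurd (ha 0) (by simp [h])

lemma dirCoord (m : Fin (N+1)) : (‖a - η‖⁻¹ • (a - η) : EuclideanSpace ℝ (Fin (N+1))) m
    = ‖a - η‖⁻¹ * (a m - η m) := by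
  simp [PiLp.smul_apply, PiLp.sub_apply]

lemma dir_pos (ha : ∀ m, η m < a m) (m : Fin (N+1)) :
    0 < (‖a - η‖⁻¹ • (a - η) : EuclideanSpace ℝ (Fin (N+1))) m := by
  rw [dirCoord]
  exact mul_pos (inv_pos.mpr (norm_sub_pos' η a ha)) (by linarith [ha m])

lemma dir_norm (ha : ∀ m, η m < a m) :
    ‖(‖a - η‖⁻¹ • (a - η) : EuclideanSpace ℝ (Fin (N+1)))‖ = 1 := by
  rw [norm_smul, norm_inv, norm_norm]
  exact inv_mul_cancel₀ (norm_sub_pos' η a ha).ne'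

lemma sLen_dir_self (ha : ∀ m, η m < a m) : sLen η (‖a - η‖⁻¹ • (a - η)) a = ‖a - η‖ := by
  have ht := norm_sub_pos' η a ha
  have : ∀ m : Fin (N+1), max (a m - η m) 0 / (‖a - η‖⁻¹ • (a - η) : EuclideanSpace ℝ (Fin (N+1))) m
      = ‖a - η‖ := by
    intro m
    rw [dirCoord, max_eq_left (by linarith [ha m])]
    have hm : 0 < a m - η m := by linarith [ha m]
    rw [div_eq_iff (by positivity)]
    field_simp
  rw [sLen]
  simp only [this]
  exact ciInf_const

lemma sLen_dir_lt (ha : ∀ m, η m < a m) (b : EuclideanSpace ℝ (Fin (N+1))) (m : Fin (N+1))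
    (hb : b m < a m) : sLen η (‖a - η‖⁻¹ • (a - η)) b < ‖a - η‖ := by
  have ht := norm_sub_pos' η a ha
  refine lt_of_le_of_lt (sLen_le _ _ _ m) ?_
  rw [dirCoord]
  have ham : 0 < a m - η m := by linarith [ha m]
  have hlt : max (b m - η m) 0 < a m - η m := by
    rcases le_or_gt (b m - η m) 0 with h | h
    · rw [max_eq_right h]; exact ham
    · rw [max_eq_left h.le]; linarith
  calc max (b m - η m) 0 / (‖a - η‖⁻¹ * (a m - η m))
      < (a m - η m) / (‖a - η‖⁻¹ * (a m - η m)) :=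
        (div_lt_div_iff_of_pos_right (by positivity)).mpr hlt
    _ = ‖a - η‖ := by field_simp

end dir

/-! ### Coordinates on the sphere -/

lemma sum_sq_eq_one {z : EuclideanSpace ℝ (Fin (N+1))} (hz : ‖z‖ = 1) :
    ∑ m, z m ^ 2 = 1 := by
  have h := EuclideanSpace.norm_eq z
  rw [hz] at h
  have : (1:ℝ) ^ 2 = (Real.sqrt (∑ m, ‖z m‖ ^ 2)) ^ 2 := by rw [← h]
  rw [Real.sq_sqrt (by positivity)] at this
  simpa [Real.norm_eq_abs, sq_abs] using this.symm

lemma norm_eq_one_of_sum_sq {z : EuclideanSpace ℝ (Fin (N+1))} (hz : ∑ m, z m ^ 2 = 1) :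
    ‖z‖ = 1 := by
  rw [EuclideanSpace.norm_eq]
  simp only [Real.norm_eq_abs, sq_abs]
  rw [hz, Real.sqrt_one]

lemma exists_coord_sq_ge {z : EuclideanSpace ℝ (Fin (N+1))} (hz : ‖z‖ = 1) :
    ∃ m, 1 / (N+1 : ℝ) ≤ z m ^ 2 := by
  by_contra h
  push_neg at h
  have hsum : ∑ m, z m ^ 2 < ∑ _m : Fin (N+1), 1 / (N+1 : ℝ) :=
    Finset.sum_lt_sum_of_nonempty Finset.univ_nonempty (fun m _ => h m)
  rw [sum_sq_eq_one hz] at hsum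
  simp only [Finset.sum_const, Finset.card_univ, Fintype.card_fin, nsmul_eq_mul] at hsum
  push_cast at hsum
  have h2 : ((N:ℝ)+1) * (1/((N:ℝ)+1)) = 1 := by
    field_simp
  linarith

lemma exists_coord_ge {z : EuclideanSpace ℝ (Fin (N+1))} (hz : z ∈ Splus (N+1)) :
    ∃ m, 1 / Real.sqrt (N+1 : ℝ) ≤ z m := by
  obtain ⟨m, hm⟩ := exists_coord_sq_ge hz.2
  refine ⟨m, ?_⟩
  have h1 : Real.sqrt (1 / (N+1:ℝ)) ≤ Real.sqrt (z m ^ 2) := Real.sqrt_le_sqrt hm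
  rw [Real.sqrt_sq (hz.1 m).le] at h1
  rw [Real.sqrt_div' 1 (by positivity), Real.sqrt_one] at h1
  exact h1

/-- uniform bound for `sLen` over the positive sphere -/
lemma sLen_le_bound (η y : EuclideanSpace ℝ (Fin (N+1))) {z : EuclideanSpace ℝ (Fin (N+1))}
    (hz : z ∈ Splus (N+1)) :
    sLen η z y ≤ Real.sqrt (N+1:ℝ)
      * Finset.univ.sup' Finset.univ_nonempty (fun m => max (y m - η m) 0) := by
  obtain ⟨m, hm⟩ := exists_coord_ge hz
  set C := Finset.univ.sup' Finset.univ_nonempty (fun m => max (y m - η m) 0) with hC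
  have hCm : max (y m - η m) 0 ≤ C :=
    Finset.le_sup' (fun m => max (y m - η m) 0) (Finset.mem_univ m)
  have hC0 : 0 ≤ C := le_trans (le_max_right _ _) hCm
  have hr : (0:ℝ) < 1 / Real.sqrt (N+1:ℝ) := by positivity
  calc sLen η z y ≤ max (y m - η m) 0 / z m := sLen_le η z y m
    _ ≤ C / z m := (div_le_div_iff_of_pos_right (hz.1 m)).mpr hCm
    _ ≤ C / (1 / Real.sqrt (N+1:ℝ)) := div_le_div_of_nonneg_left hC0 hr hm
    _ = Real.sqrt (N+1:ℝ) * C := by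
        have h0 : Real.sqrt (N+1:ℝ) ≠ 0 := by positivity
        field_simp

/-! ### The graph and projection maps -/

/-- The graph map over the hyperplane omitting coordinate `m`. -/
noncomputable def gmap (m : Fin (N+1)) (w : Fin N → ℝ) : EuclideanSpace ℝ (Fin (N+1)) :=
  WithLp.toLp 2 (m.insertNth (Real.sqrt (1 - ∑ i, w i ^ 2)) w)

/-- The coordinate projection dropping coordinate `m`. -/
def pmap (m : Fin (N+1)) (z : EuclideanSpace ℝ (Fin (N+1))) : Fin N → ℝ :=
  fun i => z (m.succAbove i)

/-- parameter domain for the graph pieces covering `Splus` -/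
def Dset (N : ℕ) : Set (Fin N → ℝ) := {w | ∑ i, w i ^ 2 ≤ 1 - 1/(N+1 : ℝ)}

lemma gmap_apply_same (m : Fin (N+1)) (w : Fin N → ℝ) :
    gmap m w m = Real.sqrt (1 - ∑ i, w i ^ 2) := by
  simp [gmap]

lemma gmap_apply_succAbove (m : Fin (N+1)) (w : Fin N → ℝ) (i : Fin N) :
    gmap m w (m.succAbove i) = w i := by
  simp [gmap]

lemma gmap_continuous (m : Fin (N+1)) :
    Continuous (gmap m : (Fin N → ℝ) → EuclideanSpace ℝ (Fin (N+1))) := by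
  have h1 : Continuous (fun w : Fin N → ℝ =>
      (m.insertNth (Real.sqrt (1 - ∑ i, w i ^ 2)) w : Fin (N+1) → ℝ)) := by
    apply continuous_pi
    intro j
    refine Fin.succAboveCases m ?_ ?_ j
    · simp only [Fin.insertNth_apply_same]
      exact Real.continuous_sqrt.comp (continuous_const.sub (by continuity))
    · intro i
      simp only [Fin.insertNth_apply_succAbove]
      exact continuous_apply i
  exact (PiLp.continuous_toLp (p := 2) (β := fun _ : Fin (N+1) => ℝ)).comp h1

lemma pmap_gmap (m : Fin (N+1)) (w : Fin N → ℝ) : pmap m (gmap m w) = w := by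
  funext i
  simp [pmap, gmap_apply_succAbove]

lemma gmap_pmap {m : Fin (N+1)} {z : EuclideanSpace ℝ (Fin (N+1))} (hz : ∑ j, z j ^ 2 = 1)
    (hm : 0 ≤ z m) : gmap m (pmap m z) = z := by
  ext j
  refine Fin.succAboveCases m ?_ ?_ j
  · rw [gmap_apply_same]
    have hs : ∑ i, pmap m z i ^ 2 = 1 - z m ^ 2 := by
      have := Fin.sum_univ_succAbove (fun j => z j ^ 2) m
      rw [hz] at this
      simp only [pmap]
      linarith
    rw [hs]
    rw [show 1 - (1 - z m ^2) = z m ^2 by ring, Real.sqrt_sq hm]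
  · intro i
    rw [gmap_apply_succAbove]
    rfl

lemma pmap_lipschitz (m : Fin (N+1)) :
    LipschitzWith 1 (pmap m : EuclideanSpace ℝ (Fin (N+1)) → (Fin N → ℝ)) := by
  apply LipschitzWith.of_dist_le_mul
  intro z z'
  rw [NNReal.coe_one, one_mul]
  rw [dist_pi_le_iff dist_nonneg]
  intro i
  rw [EuclideanSpace.dist_eq]
  have h1 : dist (z (m.succAbove i)) (z' (m.succAbove i)) ^ 2
      ≤ ∑ j, dist (z j) (z' j) ^ 2 :=
    Finset.single_le_sum (f := fun j => dist (z j) (z' j) ^ 2) (fun j _ => sq_nonneg _)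
      (Finset.mem_univ (m.succAbove i))
  calc dist (pmap m z i) (pmap m z' i)
      = Real.sqrt (dist (z (m.succAbove i)) (z' (m.succAbove i)) ^2) := by
        rw [Real.sqrt_sq dist_nonneg]; rfl
    _ ≤ Real.sqrt (∑ j, dist (z j) (z' j) ^ 2) := Real.sqrt_le_sqrt h1

lemma sqrt_lip {c x y : ℝ} (hc : 0 < c) (hx : c ≤ x) (hy : c ≤ y) :
    |Real.sqrt x - Real.sqrt y| ≤ |x - y| / (2 * Real.sqrt c) := by
  have hcs : 0 < Real.sqrt c := Real.sqrt_pos.mpr hc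
  have hxs : Real.sqrt c ≤ Real.sqrt x := Real.sqrt_le_sqrt hx
  have hys : Real.sqrt c ≤ Real.sqrt y := Real.sqrt_le_sqrt hy
  have hx2 : Real.sqrt x ^ 2 = x := Real.sq_sqrt (hc.le.trans hx)
  have hy2 : Real.sqrt y ^ 2 = y := Real.sq_sqrt (hc.le.trans hy)
  rw [le_div_iff₀ (by positivity)]
  have habs : |x - y| = |Real.sqrt x - Real.sqrt y| * (Real.sqrt x + Real.sqrt y) := by
    rw [← abs_of_nonneg (show (0:ℝ) ≤ Real.sqrt x + Real.sqrt y by positivity), ← abs_mul]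
    congr 1
    nlinarith [hx2, hy2]
  rw [habs]
  apply mul_le_mul_of_nonneg_left ?_ (abs_nonneg _)
  linarith

lemma abs_le_one_of_mem {w : Fin N → ℝ} (hw : w ∈ Dset N) (i : Fin N) : |w i| ≤ 1 := by
  have h1 : w i ^ 2 ≤ ∑ j, w j ^ 2 :=
    Finset.single_le_sum (f := fun j => w j ^ 2) (fun j _ => sq_nonneg _) (Finset.mem_univ i)
  have h2 : w i ^ 2 ≤ 1 := by
    refine h1.trans (hw.trans ?_)
    have : (0:ℝ) < 1/(N+1:ℝ) := by positivity
    linarith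
  nlinarith [abs_nonneg (w i), sq_abs (w i)]

lemma sum_sq_diff_le {w v : Fin N → ℝ} (hw : w ∈ Dset N) (hv : v ∈ Dset N) :
    |(∑ i, w i ^ 2) - ∑ i, v i ^ 2| ≤ 2 * N * dist w v := by
  rw [← Finset.sum_sub_distrib]
  refine (Finset.abs_sum_le_sum_abs _ _).trans ?_
  have hbound : ∀ i : Fin N, |w i ^ 2 - v i ^ 2| ≤ 2 * dist w v := by
    intro i
    have h1 : |w i - v i| ≤ dist w v := by
      rw [← Real.dist_eq]; exact dist_le_pi_dist w v i
    have h2 : |w i + v i| ≤ 2 := by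
      calc |w i + v i| ≤ |w i| + |v i| := abs_add_le _ _
        _ ≤ 2 := by linarith [abs_le_one_of_mem hw i, abs_le_one_of_mem hv i]
    calc |w i ^ 2 - v i ^ 2| = |w i + v i| * |w i - v i| := by
          rw [← abs_mul]; congr 1; ring
      _ ≤ 2 * dist w v := by
          apply mul_le_mul h2 h1 (abs_nonneg _) (by norm_num)
  refine (Finset.sum_le_sum (fun i _ => hbound i)).trans ?_
  rw [Finset.sum_const, Finset.card_univ, Fintype.card_fin, nsmul_eq_mul]
  ring_nf
  rfl

lemma gmap_lipschitzOn (m : Fin (N+1)) :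
    LipschitzOnWith ((N+1)^2 : ℝ≥0) (gmap m) (Dset N) := by
  rw [lipschitzOnWith_iff_dist_le_mul]
  intro w hw v hv
  have hd : (0:ℝ) ≤ dist w v := dist_nonneg
  set d := dist w v with hdd
  have hcoord : ∀ i : Fin N, |w i - v i| ≤ d := by
    intro i
    rw [← Real.dist_eq]; exact dist_le_pi_dist w v i
  have hc : (0:ℝ) < 1/(N+1:ℝ) := by positivity
  have hwc : 1/(N+1:ℝ) ≤ 1 - ∑ i, w i ^ 2 := by
    have := hw; simp only [Dset, Set.mem_setOf_eq] at this; linarith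
  have hvc : 1/(N+1:ℝ) ≤ 1 - ∑ i, v i ^ 2 := by
    have := hv; simp only [Dset, Set.mem_setOf_eq] at this; linarith
  have hs := sqrt_lip hc hwc hvc
  have hdiff : |(1 - ∑ i, w i ^ 2) - (1 - ∑ i, v i ^ 2)| ≤ 2 * N * d := by
    rw [show (1 - ∑ i, w i ^ 2) - (1 - ∑ i, v i ^ 2) = -((∑ i, w i ^ 2) - ∑ i, v i ^ 2) by ring,
      abs_neg]
    exact sum_sq_diff_le hw hv
  have hsqrtc : Real.sqrt (1/(N+1:ℝ)) = 1 / Real.sqrt (N+1:ℝ) := by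
    rw [Real.sqrt_div' 1 (by positivity), Real.sqrt_one]
  have hsq : |gmap m w m - gmap m v m| ≤ N * Real.sqrt (N+1:ℝ) * d := by
    rw [gmap_apply_same, gmap_apply_same]
    refine hs.trans ?_
    rw [hsqrtc]
    have hsp : (0:ℝ) < Real.sqrt (N+1:ℝ) := Real.sqrt_pos.mpr (by positivity)
    rw [div_le_iff₀ (by positivity)]
    calc |(1 - ∑ i, w i ^ 2) - (1 - ∑ i, v i ^ 2)| ≤ 2 * N * d := hdiff
      _ ≤ N * Real.sqrt (N+1:ℝ) * d * (2 * (1 / Real.sqrt (N+1:ℝ))) := by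
          apply le_of_eq
          field_simp
  have hdist : dist (gmap m w) (gmap m v) ^ 2 ≤ ((N:ℝ)*Real.sqrt (N+1:ℝ)*d)^2 + N * d^2 := by
    rw [EuclideanSpace.dist_eq, Real.sq_sqrt (by positivity)]
    rw [Fin.sum_univ_succAbove (fun j => dist (gmap m w j) (gmap m v j) ^ 2) m]
    have h1 : dist (gmap m w m) (gmap m v m) ^ 2 ≤ ((N:ℝ)*Real.sqrt (N+1:ℝ)*d)^2 := by
      rw [Real.dist_eq]
      have := hsq
      have hnn : (0:ℝ) ≤ (N:ℝ)*Real.sqrt (N+1:ℝ)*d := by positivity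
      nlinarith [abs_nonneg (gmap m w m - gmap m v m)]
    have h2 : ∑ i : Fin N, dist (gmap m w (m.succAbove i)) (gmap m v (m.succAbove i)) ^ 2
        ≤ N * d ^ 2 := by
      have : ∀ i : Fin N,
          dist (gmap m w (m.succAbove i)) (gmap m v (m.succAbove i)) ^ 2 ≤ d ^ 2 := by
        intro i
        rw [gmap_apply_succAbove, gmap_apply_succAbove, Real.dist_eq]
        nlinarith [hcoord i, abs_nonneg (w i - v i)]
      refine (Finset.sum_le_sum (fun i _ => this i)).trans ?_
      rw [Finset.sum_const, Finset.card_univ, Fintype.card_fin, nsmul_eq_mul]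
    linarith
  have hK : ((N:ℝ)*Real.sqrt (N+1:ℝ)*d)^2 + N * d^2 ≤ (((N+1)^2 : ℝ) * d)^2 := by
    have hsq1 : Real.sqrt (N+1:ℝ) ^ 2 = (N+1:ℝ) := Real.sq_sqrt (by positivity)
    have hd2 : (0:ℝ) ≤ d^2 := sq_nonneg d
    nlinarith [sq_nonneg ((N:ℝ)*d), Nat.cast_nonneg (α := ℝ) N]
  have hfin : dist (gmap m w) (gmap m v) ≤ ((N+1)^2 : ℝ) * d := by
    have h0 : (0:ℝ) ≤ ((N+1)^2:ℝ) * d := by positivity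
    nlinarith [dist_nonneg (x := gmap m w) (y := gmap m v)]
  refine hfin.trans_eq ?_
  norm_num

/-! ### Measure-theoretic facts about `Splus` -/

lemma hausdorff_pi_eq : (μH[(N:ℝ)] : Measure (Fin N → ℝ)) = volume := by
  have := MeasureTheory.hausdorffMeasure_pi_real (ι := Fin N)
  simpa [Fintype.card_fin] using this

lemma splus_subset_cover :
    Splus (N+1) ⊆ ⋃ m : Fin (N+1), gmap m '' (Dset N) := by
  intro z hz
  obtain ⟨m, hm⟩ := exists_coord_sq_ge (N := N) hz.2
  refine Set.mem_iUnion.mpr ⟨m, pmap m z, ?_, gmap_pmap (sum_sq_eq_one hz.2) (hz.1 m).le⟩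
  have hsum := Fin.sum_univ_succAbove (fun j => z j ^ 2) m
  rw [sum_sq_eq_one hz.2] at hsum
  simp only [Dset, Set.mem_setOf_eq, pmap]
  have : ∑ i : Fin N, z (m.succAbove i) ^ 2 = 1 - z m ^ 2 := by linarith
  rw [this]
  linarith

lemma Dset_bounded : Dset N ⊆ Metric.closedBall (0 : Fin N → ℝ) 1 := by
  intro w hw
  rw [Metric.mem_closedBall, dist_pi_le_iff zero_le_one]
  intro i
  rw [Real.dist_eq, show (0 : Fin N → ℝ) i = 0 from rfl, sub_zero]
  exact abs_le_one_of_mem hw i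

lemma splus_hausdorff_ne_top : (μH[(N:ℝ)] (Splus (N+1))) ≠ ⊤ := by
  have hle : μH[(N:ℝ)] (Splus (N+1)) ≤ ∑ m : Fin (N+1), μH[(N:ℝ)] (gmap m '' (Dset N)) :=
    le_trans (measure_mono splus_subset_cover) (measure_iUnion_fintype_le _ _)
  refine ne_top_of_le_ne_top ?_ hle
  refine ENNReal.sum_ne_top.mpr (fun m _ => ?_)
  have h1 := (gmap_lipschitzOn (N := N) m).hausdorffMeasure_image_le (d := (N:ℝ))
    (Nat.cast_nonneg N)
  refine ne_top_of_le_ne_top ?_ h1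
  apply ENNReal.mul_ne_top (by simp)
  rw [hausdorff_pi_eq]
  exact ne_top_of_le_ne_top (measure_closedBall_lt_top).ne (measure_mono Dset_bounded)

lemma posSet_isOpen : IsOpen {z : EuclideanSpace ℝ (Fin (N+1)) | ∀ j, 0 < z j} := by
  have : {z : EuclideanSpace ℝ (Fin (N+1)) | ∀ j, 0 < z j}
      = ⋂ j, {z : EuclideanSpace ℝ (Fin (N+1)) | 0 < z j} := by
    ext z; simp [Set.mem_iInter]
  rw [this]
  exact isOpen_iInter_of_finite fun j => isOpen_lt continuous_const (coord_eval_continuous j)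

lemma splus_inter_open_pos {V : Set (EuclideanSpace ℝ (Fin (N+1)))} (hV : IsOpen V)
    {lam : EuclideanSpace ℝ (Fin (N+1))} (hlamS : lam ∈ Splus (N+1)) (hlamV : lam ∈ V) :
    0 < μH[(N:ℝ)] (Splus (N+1) ∩ V) := by
  set m : Fin (N+1) := 0
  set P : Set (EuclideanSpace ℝ (Fin (N+1))) := {z | ∀ j, 0 < z j} with hP
  have hPopen : IsOpen P := posSet_isOpen
  set O : Set (Fin N → ℝ) := (gmap m) ⁻¹' (V ∩ P) ∩ {w | ∑ i, w i ^ 2 < 1} with hO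
  have hOopen : IsOpen O := by
    apply IsOpen.inter
    · exact (hV.inter hPopen).preimage (gmap_continuous m)
    · exact isOpen_lt (by continuity) continuous_const
  have hmem : pmap m lam ∈ O := by
    have hg : gmap m (pmap m lam) = lam := gmap_pmap (sum_sq_eq_one hlamS.2) (hlamS.1 m).le
    constructor
    · rw [Set.mem_preimage, hg]; exact ⟨hlamV, hlamS.1⟩
    · have hsum := Fin.sum_univ_succAbove (fun j => lam j ^ 2) m
      rw [sum_sq_eq_one hlamS.2] at hsum
      simp only [Set.mem_setOf_eq, pmap]
      have hmpos := hlamS.1 m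
      nlinarith
  obtain ⟨δ, hδ, hball⟩ := Metric.isOpen_iff.mp hOopen _ hmem
  have hsub : Metric.ball (pmap m lam) δ ⊆ pmap m '' (Splus (N+1) ∩ V) := by
    intro w hw
    have hwO := hball hw
    obtain ⟨hwVP, hwlt⟩ := hwO
    rw [Set.mem_preimage] at hwVP
    refine ⟨gmap m w, ⟨⟨hwVP.2, ?_⟩, hwVP.1⟩, pmap_gmap m w⟩
    apply norm_eq_one_of_sum_sq
    rw [Fin.sum_univ_succAbove (fun j => gmap m w j ^ 2) m]
    simp only [gmap_apply_same, gmap_apply_succAbove]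
    rw [Real.sq_sqrt (by simp only [Set.mem_setOf_eq] at hwlt; linarith)]
    ring
  have hlip := (pmap_lipschitz (N := N) m).hausdorffMeasure_image_le
    (d := (N:ℝ)) (Nat.cast_nonneg N) (Splus (N+1) ∩ V)
  have hballpos : 0 < μH[(N:ℝ)] (pmap m '' (Splus (N+1) ∩ V)) := by
    refine lt_of_lt_of_le ?_ (measure_mono hsub)
    rw [hausdorff_pi_eq]
    exact Metric.measure_ball_pos _ _ hδ
  calc (0:ℝ≥0∞) < μH[(N:ℝ)] (pmap m '' (Splus (N+1) ∩ V)) := hballpos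
    _ ≤ (1:ℝ≥0∞) ^ (N:ℝ) * μH[(N:ℝ)] (Splus (N+1) ∩ V) := hlip
    _ = μH[(N:ℝ)] (Splus (N+1) ∩ V) := by simp

lemma splus_measurable : MeasurableSet (Splus (N+1)) := by
  have : Splus (N+1) = {z : EuclideanSpace ℝ (Fin (N+1)) | ∀ j, 0 < z j}
      ∩ {z : EuclideanSpace ℝ (Fin (N+1)) | ‖z‖ = 1} := by
    ext z; exact Iff.rfl
  rw [this]
  exact posSet_isOpen.measurableSet.inter
    ((isClosed_eq continuous_norm continuous_const).measurableSet)

end Stmt11Aux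

open Stmt11Aux in
/-- strict Pareto compliancy of length-based R2 utilities: if `τ` is
strictly increasing on `ℝ_{≥0}` and `A`, `B` are finite subsets of the region strictly
dominating `η` with `A` strictly dominating `B` as sets (strict inclusion of weak
domination regions), then `U_{η,τ}[A] > U_{η,τ}[B]`. -/
theorem stmt11 (M : ℕ) (hM : 1 ≤ M) (η : EuclideanSpace ℝ (Fin M))
    (τ : ℝ → ℝ) (hτ : StrictMonoOn τ (Set.Ici (0 : ℝ)))
    (A B : Finset (EuclideanSpace ℝ (Fin M))) (hAne : A.Nonempty) (hBne : B.Nonempty)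
    (hAdom : ∀ a ∈ A, ∀ m, η m < a m) (hBdom : ∀ b ∈ B, ∀ m, η m < b m)
    (hdom : weakDom (B : Set (EuclideanSpace ℝ (Fin M))) ⊂
      weakDom (A : Set (EuclideanSpace ℝ (Fin M)))) :
    lenUtility η τ B hBne < lenUtility η τ A hAne := by
  classical
  obtain ⟨N, rfl⟩ : ∃ N, M = N + 1 := ⟨M - 1, (Nat.succ_pred_eq_of_pos hM).symm⟩
  set μ : Measure (EuclideanSpace ℝ (Fin (N+1))) := μH[(N:ℝ)] with hμ
  set S : Set (EuclideanSpace ℝ (Fin (N+1))) := Splus (N+1) with hS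
  have hSmeas : MeasurableSet S := splus_measurable
  -- rewrite lenUtility with this measure
  have hcast : ((N+1 : ℕ) : ℝ) - 1 = (N:ℝ) := by push_cast; ring
  have hlen : ∀ (Y : Finset (EuclideanSpace ℝ (Fin (N+1)))) (hY : Y.Nonempty),
      lenUtility η τ Y hY
        = ⨍ lam in S, Y.sup' hY (fun y => τ (sLen η lam y)) ∂μ := by
    intro Y hY
    rw [lenUtility, hμ, hS, hcast]
  -- the monotone modification of τ
  set τ' : ℝ → ℝ := fun x => τ (max x 0) with hτ'
  have hτ'mono : Monotone τ' := by
    intro x y hxy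
    exact hτ.monotoneOn (le_max_right x 0) (le_max_right y 0) (max_le_max hxy le_rfl)
  -- the sup of sLen
  set G : ∀ (Y : Finset (EuclideanSpace ℝ (Fin (N+1)))), Y.Nonempty →
      EuclideanSpace ℝ (Fin (N+1)) → ℝ :=
    fun Y hY lam => Y.sup' hY (fun y => sLen η lam y) with hG
  have hGmeas : ∀ Y hY, Measurable (G Y hY) := by
    intro Y hY
    have h1 : Measurable (Y.sup' hY (fun y (lam : EuclideanSpace ℝ (Fin (N+1))) =>
        sLen η lam y)) :=
      Finset.measurable_sup' hY (fun y _ => sLen_measurable η y)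
    convert h1 using 1
    ext lam
    simp [hG, Finset.sup'_apply]
  have hGnonneg : ∀ Y hY lam, lam ∈ S → 0 ≤ G Y hY lam := by
    intro Y hY lam hlam
    obtain ⟨y, hy⟩ := hY
    exact le_trans (sLen_nonneg η lam y hlam.1)
      (Finset.le_sup' (f := fun y => sLen η lam y) hy)
  -- the integrands
  have hFeq : ∀ Y hY lam, lam ∈ S →
      Y.sup' hY (fun y => τ (sLen η lam y)) = τ' (G Y hY lam) := by
    intro Y hY lam hlam
    have h1 : τ' (G Y hY lam) = Y.sup' hY (τ' ∘ (fun y => sLen η lam y)) :=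
      Finset.comp_sup'_eq_sup'_comp hY τ' (fun x y => hτ'mono.map_max)
    rw [h1]
    apply Finset.sup'_congr hY rfl
    intro y hy
    simp only [Function.comp_apply, hτ']
    rw [max_eq_left (sLen_nonneg η lam y hlam.1)]
  -- bound for G on S
  have hGbound : ∀ Y hY, ∃ K : ℝ, ∀ lam ∈ S, G Y hY lam ≤ K := by
    intro Y hY
    refine ⟨Y.sup' hY (fun y => Real.sqrt (N+1:ℝ)
      * Finset.univ.sup' Finset.univ_nonempty (fun m => max (y m - η m) 0)), ?_⟩
    intro lam hlam
    apply Finset.sup'_le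
    intro y hy
    exact le_trans (sLen_le_bound η y hlam)
      (Finset.le_sup' (f := fun y => Real.sqrt (N+1:ℝ)
        * Finset.univ.sup' Finset.univ_nonempty (fun m => max (y m - η m) 0)) hy)
  -- finiteness of the measure
  haveI : IsFiniteMeasure (μ.restrict S) := by
    constructor
    rw [Measure.restrict_apply_univ]
    exact lt_of_le_of_ne le_top splus_hausdorff_ne_top
  -- integrability
  have hInt : ∀ (Y : Finset (EuclideanSpace ℝ (Fin (N+1)))) (hY : Y.Nonempty),
      Integrable (fun lam => Y.sup' hY (fun y => τ (sLen η lam y)))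
      (μ.restrict S) := by
    intro Y hY
    obtain ⟨K, hK⟩ := hGbound Y hY
    have hint0 : Integrable (fun lam => τ' (G Y hY lam)) (μ.restrict S) := by
      refine ⟨((hτ'mono.measurable).comp (hGmeas Y hY)).aestronglyMeasurable, ?_⟩
      apply HasFiniteIntegral.of_bounded (C := max |τ' 0| |τ' K|)
      refine (ae_restrict_mem hSmeas).mono (fun lam hlam => ?_)
      have h1 : τ' 0 ≤ τ' (G Y hY lam) := hτ'mono (hGnonneg Y hY lam hlam)
      have h2 : τ' (G Y hY lam) ≤ τ' K := hτ'mono (hK lam hlam)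
      exact abs_le_max_abs_abs h1 h2
    refine hint0.congr ?_
    refine (ae_restrict_mem hSmeas).mono (fun lam hlam => ?_)
    exact (hFeq Y hY lam hlam).symm
  -- pointwise inequality on S
  have hle : ∀ lam ∈ S, B.sup' hBne (fun y => τ (sLen η lam y))
      ≤ A.sup' hAne (fun y => τ (sLen η lam y)) := by
    intro lam hlam
    rw [hFeq B hBne lam hlam, hFeq A hAne lam hlam]
    apply hτ'mono
    apply Finset.sup'_le
    intro b hb
    have hbB : b ∈ weakDom (B : Set (EuclideanSpace ℝ (Fin (N+1)))) :=
      ⟨b, Finset.mem_coe.mpr hb, fun m => le_rfl⟩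
    obtain ⟨a, haA, hba⟩ := hdom.subset hbB
    exact le_trans (sLen_mono η lam b a hlam.1 hba)
      (Finset.le_sup' (f := fun y => sLen η lam y) (Finset.mem_coe.mp haA))
  -- the witness direction
  obtain ⟨x, hxA, hxB⟩ := Set.exists_of_ssubset hdom
  obtain ⟨a, haA, hxa⟩ := hxA
  have haF : a ∈ A := Finset.mem_coe.mp haA
  have ha' : ∀ m, η m < a m := hAdom a haF
  have haB : ∀ b ∈ B, ∃ m, b m < a m := by
    intro b hb
    by_contra h
    push_neg at h
    exact hxB ⟨b, Finset.mem_coe.mpr hb, fun m => (hxa m).trans (h m)⟩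
  set lam0 : EuclideanSpace ℝ (Fin (N+1)) := ‖a - η‖⁻¹ • (a - η) with hlam0
  have hlam0S : lam0 ∈ S := ⟨dir_pos η a ha', dir_norm η a ha'⟩
  -- the open region of directions where B is strictly dominated
  set V : Set (EuclideanSpace ℝ (Fin (N+1))) :=
    ⋂ b ∈ B, ({z : EuclideanSpace ℝ (Fin (N+1)) | ∀ j, 0 < z j} ∩
      (fun lam => sLen η lam a - sLen η lam b) ⁻¹' (Set.Ioi (0:ℝ))) with hV
  have hVopen : IsOpen V := by
    apply isOpen_biInter_finset
    intro b hb
    exact ContinuousOn.isOpen_inter_preimage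
      ((sLen_continuousOn η a).sub (sLen_continuousOn η b)) posSet_isOpen isOpen_Ioi
  have hlam0V : lam0 ∈ V := by
    rw [hV, Set.mem_iInter₂]
    intro b hb
    refine ⟨dir_pos η a ha', ?_⟩
    simp only [Set.mem_preimage, Set.mem_Ioi]
    obtain ⟨m, hm⟩ := haB b hb
    have h1 := sLen_dir_lt η a ha' b m hm
    have h2 := sLen_dir_self η a ha'
    rw [← hlam0] at h1 h2
    linarith
  -- strict inequality on S ∩ V
  have hstrict : ∀ lam ∈ S ∩ V, B.sup' hBne (fun y => τ (sLen η lam y))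
      < A.sup' hAne (fun y => τ (sLen η lam y)) := by
    intro lam hlam
    obtain ⟨hlamS, hlamV⟩ := hlam
    have hGBlt : G B hBne lam < sLen η lam a := by
      simp only [hG]
      rw [Finset.sup'_lt_iff]
      intro b hb
      have hmem := Set.mem_iInter₂.mp hlamV b hb
      have h2 := hmem.2
      simp only [Set.mem_preimage, Set.mem_Ioi] at h2
      linarith
    have hGAle : sLen η lam a ≤ G A hAne lam :=
      Finset.le_sup' (f := fun y => sLen η lam y) haF
    rw [hFeq B hBne lam hlamS, hFeq A hAne lam hlamS]
    have h0B : 0 ≤ G B hBne lam := hGnonneg B hBne lam hlamS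
    have h0A : 0 ≤ G A hAne lam := hGnonneg A hAne lam hlamS
    simp only [hτ']
    rw [max_eq_left h0B, max_eq_left h0A]
    exact hτ (Set.mem_Ici.mpr h0B) (Set.mem_Ici.mpr h0A) (lt_of_lt_of_le hGBlt hGAle)
  -- positive measure of the strictness region
  have hposSV : 0 < μ (S ∩ V) := splus_inter_open_pos hVopen hlam0S hlam0V
  -- strict integral inequality
  set f := fun lam => B.sup' hBne (fun y => τ (sLen η lam y)) with hf
  set g := fun lam => A.sup' hAne (fun y => τ (sLen η lam y)) with hg
  have hIf := hInt B hBne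
  have hIg := hInt A hAne
  have hdiff_pos : 0 < ∫ lam in S, (g lam - f lam) ∂μ := by
    refine (integral_pos_iff_support_of_nonneg_ae ?_ ?_).mpr ?_
    · exact (ae_restrict_mem hSmeas).mono (fun lam hlam => sub_nonneg.mpr (hle lam hlam))
    · exact hIg.sub hIf
    · have hsupp : V ∩ S ⊆ Function.support (fun lam => g lam - f lam) := by
        intro lam hlam
        exact sub_ne_zero.mpr (ne_of_gt (hstrict lam ⟨hlam.2, hlam.1⟩))
      have hposVS : 0 < μ (V ∩ S) := by rwa [Set.inter_comm]
      calc (0:ENNReal) < μ (V ∩ S) := hposVS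
        _ = μ.restrict S (V ∩ S) := by
            rw [Measure.restrict_apply (hVopen.measurableSet.inter hSmeas),
              Set.inter_assoc, Set.inter_self]
        _ ≤ μ.restrict S (Function.support fun lam => g lam - f lam) := measure_mono hsupp
  have hintlt : ∫ lam in S, f lam ∂μ < ∫ lam in S, g lam ∂μ := by
    have hsub := integral_sub hIg hIf
    have : ∫ lam in S, (g lam - f lam) ∂μ
        = (∫ lam in S, g lam ∂μ) - ∫ lam in S, f lam ∂μ := hsub
    linarith
  -- conclude
  rw [hlen B hBne, hlen A hAne, setAverage_eq, setAverage_eq]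
  have hμS_pos : 0 < (μ S).toReal := by
    apply ENNReal.toReal_pos
    · exact (lt_of_lt_of_le hposSV (measure_mono Set.inter_subset_left)).ne'
    · exact splus_hausdorff_ne_top
  simp only [smul_eq_mul]
  exact mul_lt_mul_of_pos_left hintlt (inv_pos.mpr hμS_pos)
end

section
/- Expected Pareto front surface is a Pareto front surface: let (Ω, F, ℙ) be a probability space and Y*(ω) a random Pareto front surface with reference η whose projected lengths ℓ_{η,λ}[Y*(ω)] are measurable, positive almost surely, and uniformly bounded almost surely. Then the set {η + E_ω[ℓ_{η,λ}[Y*(ω)]] λ : λ ∈ S^{M−1}_+} satisfies both the positive-lengths condition and the maximum-ratio condition, and hence is a valid Pareto front surface. -/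
open MeasureTheory

lemma aux_sup_ratio {M : ℕ} (a b : ℝ) (hab : 0 ≤ a / b) (f g : Fin M → ℝ) :
    (⨆ m, (a * f m) / (b * g m)) = (a / b) * ⨆ m, f m / g m := by
  rw [Real.mul_iSup_of_nonneg hab]
  congr 1; ext m; rw [mul_div_mul_comm]

/-- expected Pareto front surface: if `Y*(ω)` is a random Pareto front
surface with reference `η` whose projected lengths are measurable, integrable, positive
a.s., uniformly bounded a.s., and satisfy the maximum ratio condition a.s., then the
expected projected lengths `λ ↦ E_ω[ℓ_{η,λ}[Y*(ω)]]` satisfy the positive-lengths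
condition and the maximum-ratio condition, so the set
`{η + E_ω[ℓ_{η,λ}[Y*(ω)]] • λ : λ ∈ S^{M-1}_+}` is a valid Pareto front surface. -/
theorem stmt13 (M : ℕ) (hM : 1 ≤ M) (η : EuclideanSpace ℝ (Fin M))
    {Ω : Type*} [MeasurableSpace Ω] (P : Measure Ω) [IsProbabilityMeasure P]
    (Y : Ω → Set (EuclideanSpace ℝ (Fin M)))
    (hmeas : ∀ lam ∈ Splus M, Measurable fun ω => projLen η (Y ω) lam)
    (hint : ∀ lam ∈ Splus M, Integrable (fun ω => projLen η (Y ω) lam) P)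
    (hray : ∀ᵐ ω ∂P, ∀ lam ∈ Splus M, ∃! t : ℝ, 0 < t ∧ η + t • lam ∈ Y ω)
    (hpos : ∀ lam ∈ Splus M, ∀ᵐ ω ∂P, 0 < projLen η (Y ω) lam)
    (hbdd : ∃ C : ℝ, ∀ᵐ ω ∂P, ∀ lam ∈ Splus M, projLen η (Y ω) lam ≤ C)
    (hratio : ∀ lam ∈ Splus M, ∀ ups ∈ Splus M, ∀ᵐ ω ∂P,
      1 ≤ ⨆ m, (projLen η (Y ω) lam * lam m) / (projLen η (Y ω) ups * ups m)) :
    (∀ lam ∈ Splus M, 0 < ∫ ω, projLen η (Y ω) lam ∂P) ∧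
      ∀ lam ∈ Splus M, ∀ ups ∈ Splus M,
        1 ≤ ⨆ m, ((∫ ω, projLen η (Y ω) lam ∂P) * lam m) /
            ((∫ ω, projLen η (Y ω) ups ∂P) * ups m) := by

  haveI : Nonempty (Fin M) := ⟨⟨0, hM⟩⟩
  have hposint : ∀ lam ∈ Splus M, 0 < ∫ ω, projLen η (Y ω) lam ∂P := by
    intro lam hlam
    set f : Ω → ℝ := fun ω => projLen η (Y ω) lam with hf
    have hfpos : ∀ᵐ ω ∂P, 0 < f ω := hpos lam hlam
    have hfae : 0 ≤ᵐ[P] f := hfpos.mono fun ω h => h.le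
    rw [integral_pos_iff_support_of_nonneg_ae hfae (hint lam hlam)]
    have hsub : {ω | ¬ 0 < f ω} ⊆ (Function.support f)ᶜ ∪ {ω | ¬ 0 < f ω} :=
      Set.subset_union_right
    have h1 : (1 : ENNReal) ≤ P (Function.support f) := by
      have huniv : (Set.univ : Set Ω) ⊆ Function.support f ∪ {ω | ¬ 0 < f ω} := by
        intro ω _
        by_cases h : 0 < f ω
        · exact Or.inl (by simp [Function.mem_support, ne_of_gt h])
        · exact Or.inr h
      calc (1 : ENNReal) = P Set.univ := (measure_univ).symm
        _ ≤ P (Function.support f ∪ {ω | ¬ 0 < f ω}) := measure_mono huniv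
        _ ≤ P (Function.support f) + P {ω | ¬ 0 < f ω} := measure_union_le _ _
        _ = P (Function.support f) := by
            rw [ae_iff.mp hfpos, add_zero]
    exact lt_of_lt_of_le one_pos h1
  refine ⟨hposint, ?_⟩
  intro lam hlam ups hups
  set a : ℝ := ∫ ω, projLen η (Y ω) lam ∂P with ha
  set b : ℝ := ∫ ω, projLen η (Y ω) ups ∂P with hb
  have hapos : 0 < a := hposint lam hlam
  have hbpos : 0 < b := hposint ups hups
  set K : ℝ := ⨆ m, lam m / ups m with hK
  have hbdd : BddAbove (Set.range fun m => lam m / ups m) :=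
    Set.Finite.bddAbove (Set.finite_range _)
  -- pointwise a.e. inequality : f_ups ≤ K * f_lam
  have hptwise : ∀ᵐ ω ∂P, projLen η (Y ω) ups ≤ K * projLen η (Y ω) lam := by
    filter_upwards [hratio lam hlam ups hups, hpos lam hlam, hpos ups hups]
      with ω hr hl hu
    have hdiv : 0 ≤ projLen η (Y ω) lam / projLen η (Y ω) ups :=
      le_of_lt (div_pos hl hu)
    rw [aux_sup_ratio _ _ hdiv] at hr
    have h2 : projLen η (Y ω) ups ≤ projLen η (Y ω) lam / projLen η (Y ω) ups * K
        * projLen η (Y ω) ups := by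
      nlinarith
    calc projLen η (Y ω) ups
        ≤ projLen η (Y ω) lam / projLen η (Y ω) ups * K * projLen η (Y ω) ups := h2
      _ = K * projLen η (Y ω) lam := by field_simp
  have hintK : Integrable (fun ω => K * projLen η (Y ω) lam) P :=
    (hint lam hlam).const_mul K
  have hba : b ≤ K * a := by
    have := integral_mono_ae (hint ups hups) hintK hptwise
    rw [integral_const_mul] at this
    exact this
  have hdiv : 0 ≤ a / b := le_of_lt (div_pos hapos hbpos)
  rw [aux_sup_ratio _ _ hdiv]
  rw [div_mul_eq_mul_div, le_div_iff₀ hbpos, one_mul]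
  linarith [hba, mul_comm K a]
end

section
/- Quantile Pareto front surface is a Pareto front surface: under the same setup as the expectation case, for any α ∈ (0,1), the set {η + Q_α(ℓ_{η,λ}[Y*(ω)]) λ : λ ∈ S^{M−1}_+}, where Q_α denotes the α-level quantile of the real random variable ℓ_{η,λ}[Y*(·)], satisfies the positive-lengths and maximum-ratio conditions and is therefore a valid Pareto front surface. -/
open MeasureTheory
open scoped ENNReal

/-- The `α`-level (lower) quantile of a real random variable `X` under `P`. -/
noncomputable def qtl {Ω : Type*} [MeasurableSpace Ω] (P : Measure Ω) (X : Ω → ℝ)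
    (α : ℝ) : ℝ :=
  sInf {x : ℝ | α ≤ (P {ω | X ω ≤ x}).toReal}

section helpers

variable {Ω : Type*} [MeasurableSpace Ω] (P : Measure Ω) [IsProbabilityMeasure P]

omit [IsProbabilityMeasure P] in
lemma qtl_set_lb {X : Ω → ℝ} {α : ℝ} (hα : 0 < α) (hpos : ∀ᵐ ω ∂P, 0 < X ω) :
    ∀ x ∈ {x : ℝ | α ≤ (P {ω | X ω ≤ x}).toReal}, (0:ℝ) ≤ x := by
  intro x hx
  by_contra hneg
  push_neg at hneg
  have hsub : {ω | X ω ≤ x} ⊆ {ω | ¬ 0 < X ω} := by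
    intro ω hω
    simp only [Set.mem_setOf_eq] at *
    exact fun h0 => absurd (hω.trans_lt hneg) (not_lt.2 h0.le)
  have h0 : P {ω | X ω ≤ x} = 0 :=
    le_antisymm ((measure_mono hsub).trans_eq (by rwa [ae_iff] at hpos)) zero_le
  rw [Set.mem_setOf_eq, h0, ENNReal.toReal_zero] at hx
  exact absurd hx (not_le.2 hα)

lemma qtl_set_mem {X : Ω → ℝ} {α C : ℝ} (hα : α ≤ 1) (hC : ∀ᵐ ω ∂P, X ω ≤ C) :
    C ∈ {x : ℝ | α ≤ (P {ω | X ω ≤ x}).toReal} := by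
  have h0 : P {ω | ¬ X ω ≤ C} = 0 := by rwa [ae_iff] at hC
  have h1 : (1:ℝ≥0∞) ≤ P {ω | X ω ≤ C} := by
    calc (1:ℝ≥0∞) = P Set.univ := (measure_univ).symm
    _ ≤ P ({ω | X ω ≤ C} ∪ {ω | ¬ X ω ≤ C}) := by
        apply measure_mono; intro ω _; by_cases h : X ω ≤ C
        · exact Or.inl h
        · exact Or.inr h
    _ ≤ P {ω | X ω ≤ C} + P {ω | ¬ X ω ≤ C} := measure_union_le _ _
    _ = P {ω | X ω ≤ C} := by rw [h0, add_zero]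
  have h2 : P {ω | X ω ≤ C} = 1 := le_antisymm prob_le_one h1
  simp [Set.mem_setOf_eq, h2, hα]

/-- Positivity of the quantile. -/
lemma qtl_pos {X : Ω → ℝ} {α : ℝ} (hα : α ∈ Set.Ioo (0:ℝ) 1)
    (hX : Measurable X) (hpos : ∀ᵐ ω ∂P, 0 < X ω)
    (hbdd : ∃ C, ∀ᵐ ω ∂P, X ω ≤ C) : 0 < qtl P X α := by
  obtain ⟨C, hC⟩ := hbdd
  set S := {x : ℝ | α ≤ (P {ω | X ω ≤ x}).toReal} with hS
  have hne : S.Nonempty := ⟨C, qtl_set_mem P hα.2.le hC⟩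
  set A : ℕ → Set Ω := fun n => {ω | X ω ≤ ((n:ℝ)+1)⁻¹} with hA
  have hAm : ∀ n, NullMeasurableSet (A n) P :=
    fun n => (hX measurableSet_Iic).nullMeasurableSet
  have hAnti : Antitone A := by
    intro m n hmn ω hω
    simp only [hA, Set.mem_setOf_eq] at *
    refine hω.trans ?_
    apply inv_anti₀ (by positivity)
    exact add_le_add (by exact_mod_cast hmn) le_rfl
  have hInter : ⋂ n, A n ⊆ {ω | ¬ 0 < X ω} := by
    intro ω hω
    simp only [Set.mem_iInter, hA, Set.mem_setOf_eq] at hω ⊢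
    intro h0
    obtain ⟨n, hn⟩ := exists_nat_one_div_lt h0
    have := hω n
    rw [one_div] at hn
    exact absurd (this.trans_lt hn) (lt_irrefl _)
  have hInter0 : P (⋂ n, A n) = 0 :=
    le_antisymm ((measure_mono hInter).trans_eq (by rwa [ae_iff] at hpos)) zero_le
  have htend : Filter.Tendsto (P ∘ A) Filter.atTop (nhds 0) := by
    have := tendsto_measure_iInter_atTop (μ := P) hAm hAnti ⟨0, measure_ne_top _ _⟩
    rwa [hInter0] at this
  have hev : ∀ᶠ n in Filter.atTop, P (A n) < ENNReal.ofReal α := by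
    have : (0:ℝ≥0∞) < ENNReal.ofReal α := by
      simp [ENNReal.ofReal_pos, hα.1]
    exact htend.eventually_lt_const this
  obtain ⟨n, hn⟩ := hev.exists
  have hlb : ∀ x ∈ S, ((n:ℝ)+1)⁻¹ ≤ x := by
    intro x hx
    by_contra hlt
    push_neg at hlt
    have hsub : {ω | X ω ≤ x} ⊆ A n := fun ω hω => le_trans hω hlt.le
    have hle : α ≤ (P (A n)).toReal :=
      hx.trans (ENNReal.toReal_mono (measure_ne_top _ _) (measure_mono hsub))
    have h2 : (P (A n)).toReal < α := by
      rw [← ENNReal.ofReal_toReal (measure_ne_top P (A n))] at hn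
      exact (ENNReal.ofReal_lt_ofReal_iff hα.1).mp hn
    exact absurd hle (not_le.2 h2)
  calc (0:ℝ) < ((n:ℝ)+1)⁻¹ := by positivity
  _ ≤ sInf S := le_csInf hne hlb
  _ = qtl P X α := rfl

/-- Monotonicity of the quantile. -/
lemma qtl_mono {X Y : Ω → ℝ} {α : ℝ} (hα : α ∈ Set.Ioo (0:ℝ) 1)
    (hXY : ∀ᵐ ω ∂P, X ω ≤ Y ω) (hXpos : ∀ᵐ ω ∂P, 0 < X ω)
    (hYbdd : ∃ C, ∀ᵐ ω ∂P, Y ω ≤ C) : qtl P X α ≤ qtl P Y α := by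
  obtain ⟨C, hC⟩ := hYbdd
  apply csInf_le_csInf
  · exact ⟨0, fun x hx => qtl_set_lb P hα.1 hXpos x hx⟩
  · exact ⟨C, qtl_set_mem P hα.2.le hC⟩
  · intro x hx
    simp only [Set.mem_setOf_eq] at hx ⊢
    refine hx.trans (ENNReal.toReal_mono (measure_ne_top _ _) ?_)
    have hN : P {ω | ¬ X ω ≤ Y ω} = 0 := by rwa [ae_iff] at hXY
    calc P {ω | Y ω ≤ x} ≤ P ({ω | X ω ≤ x} ∪ {ω | ¬ X ω ≤ Y ω}) := by
          apply measure_mono; intro ω hω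
          by_cases h : X ω ≤ Y ω
          · exact Or.inl (h.trans hω)
          · exact Or.inr h
    _ ≤ P {ω | X ω ≤ x} + P {ω | ¬ X ω ≤ Y ω} := measure_union_le _ _
    _ = P {ω | X ω ≤ x} := by rw [hN, add_zero]

/-- Positive homogeneity (one inequality suffices). -/
lemma qtl_smul_le {X : Ω → ℝ} {α c : ℝ} (hα : α ∈ Set.Ioo (0:ℝ) 1) (hc : 0 < c)
    (hXpos : ∀ᵐ ω ∂P, 0 < X ω) (hXbdd : ∃ C, ∀ᵐ ω ∂P, X ω ≤ C) :
    qtl P (fun ω => c * X ω) α ≤ c * qtl P X α := by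
  obtain ⟨C, hC⟩ := hXbdd
  set S := {x : ℝ | α ≤ (P {ω | X ω ≤ x}).toReal} with hSdef
  have hne : S.Nonempty := ⟨C, qtl_set_mem P hα.2.le hC⟩
  have hcXpos : ∀ᵐ ω ∂P, 0 < c * X ω := by
    filter_upwards [hXpos] with ω h using mul_pos hc h
  have key : ∀ δ > 0, qtl P (fun ω => c * X ω) α ≤ c * qtl P X α + δ := by
    intro δ hδ
    have hlt : sInf S < sInf S + δ / c := by
      have : 0 < δ / c := by positivity
      linarith
    obtain ⟨x, hxS, hxlt⟩ := exists_lt_of_csInf_lt hne hlt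
    have hmem : c * x ∈ {x : ℝ | α ≤ (P {ω | c * X ω ≤ x}).toReal} := by
      have hset : {ω | c * X ω ≤ c * x} = {ω | X ω ≤ x} := by
        ext ω; simp [mul_le_mul_iff_right₀ hc]
      simpa [Set.mem_setOf_eq, hset, hSdef] using hxS
    have h1 : qtl P (fun ω => c * X ω) α ≤ c * x :=
      csInf_le ⟨0, fun y hy => qtl_set_lb P hα.1 hcXpos y hy⟩ hmem
    have hq : qtl P X α = sInf S := rfl
    calc qtl P (fun ω => c * X ω) α ≤ c * x := h1
    _ ≤ c * (sInf S + δ / c) := by nlinarith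
    _ = c * qtl P X α + δ := by rw [hq, mul_add, mul_div_cancel₀ _ hc.ne']
  by_contra h
  push_neg at h
  obtain ⟨δ, hδ, hlt⟩ := exists_between (sub_pos.2 h)
  have := key δ hδ
  linarith

end helpers

/-- quantile Pareto front surface: under the same setup as the
expectation case, for any `α ∈ (0,1)` the quantile projected lengths
`λ ↦ Q_α(ℓ_{η,λ}[Y*(·)])` satisfy the positive-lengths and maximum-ratio conditions,
so `{η + Q_α(ℓ_{η,λ}[Y*]) • λ : λ ∈ S^{M-1}_+}` is a valid Pareto front surface. -/
theorem stmt14 (M : ℕ) (hM : 1 ≤ M) (η : EuclideanSpace ℝ (Fin M))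
    (α : ℝ) (hα : α ∈ Set.Ioo (0 : ℝ) 1)
    {Ω : Type*} [MeasurableSpace Ω] (P : Measure Ω) [IsProbabilityMeasure P]
    (Y : Ω → Set (EuclideanSpace ℝ (Fin M)))
    (hmeas : ∀ lam ∈ Splus M, Measurable fun ω => projLen η (Y ω) lam)
    (hray : ∀ᵐ ω ∂P, ∀ lam ∈ Splus M, ∃! t : ℝ, 0 < t ∧ η + t • lam ∈ Y ω)
    (hpos : ∀ lam ∈ Splus M, ∀ᵐ ω ∂P, 0 < projLen η (Y ω) lam)
    (hbdd : ∃ C : ℝ, ∀ᵐ ω ∂P, ∀ lam ∈ Splus M, projLen η (Y ω) lam ≤ C)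
    (hratio : ∀ lam ∈ Splus M, ∀ ups ∈ Splus M, ∀ᵐ ω ∂P,
      1 ≤ ⨆ m, (projLen η (Y ω) lam * lam m) / (projLen η (Y ω) ups * ups m)) :
    (∀ lam ∈ Splus M, 0 < qtl P (fun ω => projLen η (Y ω) lam) α) ∧
      ∀ lam ∈ Splus M, ∀ ups ∈ Splus M,
        1 ≤ ⨆ m, (qtl P (fun ω => projLen η (Y ω) lam) α * lam m) /
            (qtl P (fun ω => projLen η (Y ω) ups) α * ups m) := by
  obtain ⟨C, hC⟩ := hbdd
  have hbdd1 : ∀ lam ∈ Splus M, ∀ᵐ ω ∂P, projLen η (Y ω) lam ≤ C := by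
    intro lam hlam
    filter_upwards [hC] with ω h using h lam hlam
  have hposQ : ∀ lam ∈ Splus M, 0 < qtl P (fun ω => projLen η (Y ω) lam) α :=
    fun lam hlam => qtl_pos P hα (hmeas lam hlam) (hpos lam hlam) ⟨C, hbdd1 lam hlam⟩
  refine ⟨hposQ, ?_⟩
  intro lam hlam ups hups
  haveI : Nonempty (Fin M) := ⟨⟨0, hM⟩⟩
  set Qlam := qtl P (fun ω => projLen η (Y ω) lam) α with hQl
  set Qups := qtl P (fun ω => projLen η (Y ω) ups) α with hQu
  have hQlam_pos : 0 < Qlam := hposQ lam hlam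
  have hQups_pos : 0 < Qups := hposQ ups hups
  obtain ⟨m₀, hm₀⟩ := Finite.exists_max (fun m => lam m / ups m)
  set c := lam m₀ / ups m₀ with hcdef
  have hc : 0 < c := div_pos (hlam.1 m₀) (hups.1 m₀)
  have hdom : ∀ᵐ ω ∂P, projLen η (Y ω) ups ≤ c * projLen η (Y ω) lam := by
    filter_upwards [hratio lam hlam ups hups, hpos lam hlam, hpos ups hups]
      with ω hr hpl hpu
    set L := projLen η (Y ω) lam
    set U := projLen η (Y ω) ups
    obtain ⟨m₁, hm₁⟩ := Finite.exists_max (fun m => (L * lam m) / (U * ups m))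
    have hsup : (⨆ m, (L * lam m) / (U * ups m)) = (L * lam m₁) / (U * ups m₁) :=
      le_antisymm (ciSup_le hm₁)
        (le_ciSup (f := fun m => (L * lam m) / (U * ups m)) (Set.Finite.bddAbove (Set.finite_range _)) m₁)
    rw [hsup] at hr
    have h2 : U * ups m₁ ≤ L * lam m₁ :=
      (one_le_div (mul_pos hpu (hups.1 m₁))).mp hr
    have h3 : U ≤ L * (lam m₁ / ups m₁) := by
      rw [← mul_div_assoc]
      exact (le_div_iff₀ (hups.1 m₁)).mpr h2
    calc U ≤ L * (lam m₁ / ups m₁) := h3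
      _ ≤ L * c := mul_le_mul_of_nonneg_left (hm₀ m₁) hpl.le
      _ = c * L := mul_comm _ _
  have hmono : Qups ≤ qtl P (fun ω => c * projLen η (Y ω) lam) α := by
    apply qtl_mono P hα hdom (hpos ups hups)
    exact ⟨c * C, by filter_upwards [hbdd1 lam hlam] with ω h using
      mul_le_mul_of_nonneg_left h hc.le⟩
  have hhom : qtl P (fun ω => c * projLen η (Y ω) lam) α ≤ c * Qlam :=
    qtl_smul_le P hα hc (hpos lam hlam) ⟨C, hbdd1 lam hlam⟩
  have hkey : Qups ≤ c * Qlam := hmono.trans hhom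
  have h1 : 1 ≤ (Qlam * lam m₀) / (Qups * ups m₀) := by
    rw [one_le_div (mul_pos hQups_pos (hups.1 m₀))]
    have := mul_le_mul_of_nonneg_right hkey (hups.1 m₀).le
    rw [hcdef] at this
    calc Qups * ups m₀ ≤ lam m₀ / ups m₀ * Qlam * ups m₀ := this
      _ = Qlam * lam m₀ := by rw [div_mul_eq_mul_div, div_mul_eq_mul_div, div_eq_iff (hups.1 m₀).ne']; ring
  exact h1.trans (le_ciSup (f := fun m => (Qlam * lam m) / (Qups * ups m)) (Set.Finite.bddAbove (Set.finite_range _)) m₀)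
end

section
/- Gumbel limit of projected lengths for Weibull samples: let Y_1, …, Y_N be i.i.d. ℝ^M-valued random vectors with independent components Y_n^(m) ~ Weibull(α, β^(m)), let η = 0, and fix a positive unit vector λ. Then with k_λ = (Σ_m (β^(m) λ^(m))^α)^{1/α}, a_N = (log N)^{1/α − 1}/(α k_λ), b_N = (log N)^{1/α}/k_λ, the normalized maximum of the scalarised values satisfies lim_{N→∞} ℙ[(max_{n≤N} s_{0,λ}(Y_n) − b_N)/a_N ≤ x] = exp(−exp(−x)) for every x ∈ ℝ. -/
open MeasureTheory ProbabilityTheory Filter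
open Filter

lemma aux_pow_limit (x : ℝ) (c : ℕ → ℝ) (hc : ∀ᶠ n in atTop, 0 < c n)
    (h : Tendsto (fun n : ℕ => (n : ℝ) * c n) atTop (nhds (Real.exp (-x)))) :
    Tendsto (fun n : ℕ => (1 - c n) ^ n) atTop (nhds (Real.exp (-Real.exp (-x)))) := by
  have hc0 : Tendsto c atTop (nhds 0) := by
    have h1 : Tendsto (fun n : ℕ => ((n : ℝ) * c n) * (n : ℝ)⁻¹) atTop
        (nhds (Real.exp (-x) * 0)) :=
      h.mul (tendsto_inv_atTop_zero.comp tendsto_natCast_atTop_atTop)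
    rw [mul_zero] at h1
    refine h1.congr' ?_
    filter_upwards [eventually_gt_atTop 0] with n hn
    have : (n : ℝ) ≠ 0 := Nat.cast_ne_zero.mpr hn.ne'
    field_simp
  have hlog : Tendsto (slope Real.log 1) (nhdsWithin 1 {(1:ℝ)}ᶜ) (nhds 1) := by
    have := hasDerivAt_iff_tendsto_slope.mp (Real.hasDerivAt_log one_ne_zero)
    simpa using this
  have hz : Tendsto (fun n => 1 - c n) atTop (nhdsWithin 1 {(1:ℝ)}ᶜ) := by
    rw [tendsto_nhdsWithin_iff]
    constructor
    · simpa using (tendsto_const_nhds.sub hc0)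
    · filter_upwards [hc] with n hn
      simp only [Set.mem_compl_iff, Set.mem_singleton_iff]
      intro habs; nlinarith
  have hratio : Tendsto (fun n => Real.log (1 - c n) / (-(c n))) atTop (nhds 1) := by
    refine (hlog.comp hz).congr (fun n => ?_)
    simp only [Function.comp_apply, slope_def_field, Real.log_one]
    rw [show (1 - c n) - 1 = -(c n) by ring, sub_zero]
  have hmain : Tendsto (fun n : ℕ => (n : ℝ) * Real.log (1 - c n)) atTop
      (nhds (-Real.exp (-x))) := by
    have h2 := (h.mul hratio).neg
    rw [mul_one] at h2
    refine h2.congr' ?_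
    filter_upwards [hc] with n hn
    have hcne : c n ≠ 0 := ne_of_gt hn
    field_simp
  have hfin : Tendsto (fun n : ℕ => Real.exp ((n : ℝ) * Real.log (1 - c n))) atTop
      (nhds (Real.exp (-Real.exp (-x)))) := (Real.continuous_exp.tendsto _).comp hmain
  refine hfin.congr' ?_
  filter_upwards [hc0.eventually_lt_const (by norm_num : (0:ℝ) < 1)] with n hn1
  have hpos : 0 < 1 - c n := by linarith
  rw [← Real.log_pow, Real.exp_log (pow_pos hpos n)]

lemma aux_nc_limit (α x : ℝ) (hα : 0 < α) :
    Tendsto (fun n : ℕ => (n : ℝ) *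
        Real.exp (-(Real.log n * (1 + x / (α * Real.log n)) ^ α))) atTop
      (nhds (Real.exp (-x))) := by
  have hL : Tendsto (fun n : ℕ => Real.log n) atTop atTop :=
    Real.tendsto_log_atTop.comp tendsto_natCast_atTop_atTop
  have hinner : HasDerivAt (fun y : ℝ => 1 + (x / α) * y) (x / α) 0 := by
    simpa using ((hasDerivAt_id (0:ℝ)).const_mul (x / α)).const_add 1
  have hcomp : HasDerivAt (fun y : ℝ => (1 + (x / α) * y) ^ α) x 0 := by
    have houter : HasDerivAt (fun z : ℝ => z ^ α) (α * (1:ℝ) ^ (α - 1)) (1 + (x/α) * 0) := by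
      simpa using Real.hasDerivAt_rpow_const (x := (1:ℝ)) (p := α) (Or.inl one_ne_zero)
    have := houter.comp 0 hinner
    have e : α * (1:ℝ) ^ (α - 1) * (x / α) = x := by
      rw [Real.one_rpow]
      field_simp
    rw [e] at this
    exact this
  have hslope := hasDerivAt_iff_tendsto_slope.mp hcomp
  have hh : Tendsto (fun n : ℕ => (Real.log n)⁻¹) atTop (nhdsWithin 0 {(0:ℝ)}ᶜ) :=
    (tendsto_inv_atTop_nhdsGT_zero.comp hL).mono_right
      (nhdsWithin_mono _ (fun y hy => ne_of_gt hy))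
  have hE := hslope.comp hh
  have hexp : Tendsto (fun n : ℕ => Real.exp
      (-(slope (fun y : ℝ => (1 + (x / α) * y) ^ α) 0 ((Real.log n)⁻¹)))) atTop
      (nhds (Real.exp (-x))) := (Real.continuous_exp.tendsto _).comp hE.neg
  refine hexp.congr' ?_
  filter_upwards [hL.eventually (eventually_gt_atTop 0), eventually_gt_atTop 0] with n hln hn
  have hL0 : Real.log n ≠ 0 := ne_of_gt hln
  have key : -(slope (fun y : ℝ => (1 + (x / α) * y) ^ α) 0 ((Real.log n)⁻¹))
      = Real.log n - Real.log n * (1 + x / (α * Real.log n)) ^ α := by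
    have h1 : (1 : ℝ) + (x / α) * (Real.log n)⁻¹ = 1 + x / (α * Real.log n) := by
      field_simp
    simp only [slope_def_field, h1, mul_zero, add_zero, Real.one_rpow, sub_zero]
    field_simp
    ring
  rw [key, sub_eq_add_neg, Real.exp_add, Real.exp_log (by exact_mod_cast hn)]


/-- The length scalarisation with reference `0`:
`s_{0,λ}(y) = min_m max(y^(m), 0)/λ^(m)`. -/
noncomputable def sLen0 {M : ℕ} (lam : EuclideanSpace ℝ (Fin M)) (y : Fin M → ℝ) : ℝ :=
  ⨅ m, max (y m) 0 / lam m

/-- Gumbel limit of projected lengths for Weibull samples: let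
`Y_1, Y_2, …` be i.i.d. random vectors in `ℝ^M` with mutually independent components
`Y_n^(m) ~ Weibull(α, β^(m))`, and let `λ` be a positive unit vector. With
`k_λ = (Σ_m (β^(m) λ^(m))^α)^{1/α}`, `a_N = (log N)^{1/α - 1}/(α k_λ)` and
`b_N = (log N)^{1/α}/k_λ`, the normalised maximum of the scalarised values,
`(max_{n < N} s_{0,λ}(Y_n) - b_N)/a_N`, converges in distribution to the standard
Gumbel distribution. -/
theorem stmt19 (M : ℕ) (hM : 1 ≤ M)
    {Ω : Type*} [MeasurableSpace Ω] (P : Measure Ω) [IsProbabilityMeasure P]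
    (α : ℝ) (hα : 0 < α) (β : Fin M → ℝ) (hβ : ∀ m, 0 < β m)
    (Y : ℕ → Ω → (Fin M → ℝ)) (hmeas : ∀ n m, Measurable fun ω => Y n ω m)
    (hindep : iIndepFun
      (fun (p : ℕ × Fin M) ω => Y p.1 ω p.2) P)
    (hcdf : ∀ n m, ∀ x : ℝ, P {ω | Y n ω m ≤ x} =
      if 0 ≤ x then ENNReal.ofReal (1 - Real.exp (-(β m * x) ^ α)) else 0)
    (lam : EuclideanSpace ℝ (Fin M)) (hlam : ∀ m, 0 < lam m) (hunit : ‖lam‖ = 1) :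
    ∀ x : ℝ,
      Tendsto (fun N : ℕ =>
        (P {ω |
          ((⨆ n ∈ Finset.range N, sLen0 lam (Y n ω)) -
              Real.log N ^ (α⁻¹) / (∑ m, (β m * lam m) ^ α) ^ α⁻¹) /
            (Real.log N ^ (α⁻¹ - 1) / (α * (∑ m, (β m * lam m) ^ α) ^ α⁻¹)) ≤ x}).toReal)
        atTop (nhds (Real.exp (-Real.exp (-x)))) := by
  intro x
  have hne : Nonempty (Fin M) := ⟨⟨0, hM⟩⟩
  set K : ℝ := ∑ m, (β m * lam m) ^ α with hKdef
  have hKpos : 0 < K :=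
    Finset.sum_pos (fun m _ => Real.rpow_pos_of_pos (mul_pos (hβ m) (hlam m)) α)
      ⟨⟨0, hM⟩, Finset.mem_univ _⟩
  set Kα : ℝ := K ^ (α⁻¹ : ℝ) with hKαdef
  have hKαpos : 0 < Kα := Real.rpow_pos_of_pos hKpos _
  set Z : ℕ → Ω → ℝ := fun n ω => sLen0 lam (Y n ω) with hZdef
  have hZnonneg : ∀ n ω, 0 ≤ Z n ω :=
    fun n ω => le_ciInf fun m => div_nonneg (le_max_right _ _) (hlam m).le
  have hsLenMeas : Measurable (sLen0 lam) :=
    Measurable.iInf fun m => ((measurable_pi_apply m).max measurable_const).div_const _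
  -- CDF of the scalarised variable
  have hcdfZ : ∀ t : ℝ, 0 ≤ t → ∀ n : ℕ,
      P {ω | Z n ω ≤ t} = ENNReal.ofReal (1 - Real.exp (-(K * t ^ α))) := by
    intro t ht n
    have hset : {ω | Z n ω ≤ t} =
        (⋂ m, (fun ω => Y n ω m) ⁻¹' Set.Ioi (t * lam m))ᶜ := by
      ext ω
      simp only [Set.mem_compl_iff, Set.mem_iInter, Set.mem_preimage, Set.mem_Ioi,
        Set.mem_setOf_eq, not_forall, not_lt]
      constructor
      · intro h
        by_contra hcon
        push_neg at hcon
        have hlt : ∀ m, t < max (Y n ω m) 0 / lam m := fun m =>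
          (lt_div_iff₀ (hlam m)).2 (lt_max_iff.2 (Or.inl (hcon m)))
        obtain ⟨m₁, -, hm₁⟩ := Finset.exists_min_image Finset.univ
          (fun m => max (Y n ω m) 0 / lam m) ⟨⟨0, hM⟩, Finset.mem_univ _⟩
        have h2 : max (Y n ω m₁) 0 / lam m₁ ≤ Z n ω :=
          le_ciInf fun m => hm₁ m (Finset.mem_univ m)
        exact absurd ((hlt m₁).trans_le (h2.trans h)) (lt_irrefl t)
      · rintro ⟨m, hm⟩
        calc Z n ω ≤ max (Y n ω m) 0 / lam m :=
              ciInf_le (Set.Finite.bddBelow (Set.finite_range _)) m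
          _ ≤ t := (div_le_iff₀ (hlam m)).2
              ((max_le (by
                  have := (mul_nonneg ht (hlam m).le)
                  linarith) (mul_nonneg ht (hlam m).le)))
    have hmeasInter : MeasurableSet (⋂ m, (fun ω => Y n ω m) ⁻¹' Set.Ioi (t * lam m)) :=
      MeasurableSet.iInter fun m => (hmeas n m) measurableSet_Ioi
    rw [hset, measure_compl hmeasInter (measure_ne_top _ _)]
    have hPinter : P (⋂ m, (fun ω => Y n ω m) ⁻¹' Set.Ioi (t * lam m)) =
        ∏ m, P ((fun ω => Y n ω m) ⁻¹' Set.Ioi (t * lam m)) := by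
      classical
      have h1 := hindep.measure_inter_preimage_eq_mul
        (({n} : Finset ℕ) ×ˢ (Finset.univ : Finset (Fin M)))
        (sets := fun p : ℕ × Fin M => Set.Ioi (t * lam p.2))
        (fun p _ => measurableSet_Ioi)
      have h2 : (⋂ p ∈ (({n} : Finset ℕ) ×ˢ (Finset.univ : Finset (Fin M))),
          (fun ω => Y p.1 ω p.2) ⁻¹' Set.Ioi (t * lam p.2)) =
          ⋂ m, (fun ω => Y n ω m) ⁻¹' Set.Ioi (t * lam m) := by
        ext ω
        simp [Finset.mem_product]
      rw [h2, Finset.prod_product] at h1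
      simpa using h1
    have hfac : ∀ m, P ((fun ω => Y n ω m) ⁻¹' Set.Ioi (t * lam m)) =
        ENNReal.ofReal (Real.exp (-((β m * lam m) ^ α * t ^ α))) := by
      intro m
      have h0 : (0:ℝ) ≤ t * lam m := mul_nonneg ht (hlam m).le
      have hco : (fun ω => Y n ω m) ⁻¹' Set.Ioi (t * lam m) =
          {ω | Y n ω m ≤ t * lam m}ᶜ := by
        ext ω; simp [not_le]
      have hmsub : MeasurableSet {ω | Y n ω m ≤ t * lam m} :=
        (hmeas n m) measurableSet_Iic
      rw [hco, measure_compl hmsub (measure_ne_top _ _), hcdf n m, if_pos h0]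
      have he1 : Real.exp (-(β m * (t * lam m)) ^ α) ≤ 1 :=
        Real.exp_le_one_iff.2 (neg_nonpos.2 (Real.rpow_nonneg
          (mul_nonneg (hβ m).le h0) α))
      rw [measure_univ, ← ENNReal.ofReal_one,
        ← ENNReal.ofReal_sub _ (by linarith : (0:ℝ) ≤ 1 - Real.exp (-(β m * (t * lam m)) ^ α))]
      congr 1
      have harg : (β m * (t * lam m)) ^ α = (β m * lam m) ^ α * t ^ α := by
        rw [show β m * (t * lam m) = (β m * lam m) * t by ring,
          Real.mul_rpow (mul_nonneg (hβ m).le (hlam m).le) ht]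
      rw [harg]; ring
    rw [hPinter]
    have hprodcalc : (∏ m, P ((fun ω => Y n ω m) ⁻¹' Set.Ioi (t * lam m))) =
        ENNReal.ofReal (Real.exp (-(K * t ^ α))) := by
      simp_rw [hfac]
      rw [← ENNReal.ofReal_prod_of_nonneg (fun m _ => (Real.exp_nonneg _))]
      congr 1
      rw [← Real.exp_sum]
      congr 1
      rw [Finset.sum_neg_distrib]
      congr 1
      rw [hKdef, Finset.sum_mul]
    rw [hprodcalc, measure_univ, ← ENNReal.ofReal_one,
      ← ENNReal.ofReal_sub _ (Real.exp_nonneg _)]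
  -- independence across samples: product formula
  have h_le : ∀ p : ℕ × Fin M,
      MeasurableSpace.comap (fun ω => Y p.1 ω p.2) inferInstance ≤ ‹MeasurableSpace Ω› :=
    fun p => measurable_iff_comap_le.mp (hmeas p.1 p.2)
  have hblock : ∀ n : ℕ, ∀ t : ℝ,
      MeasurableSet[⨆ m : Fin M,
        MeasurableSpace.comap (fun ω => Y n ω m) inferInstance] {ω | Z n ω ≤ t} := by
    intro n t
    have hs : MeasurableSet {y : Fin M → ℝ | sLen0 lam y ≤ t} :=
      hsLenMeas measurableSet_Iic
    have h1 : MeasurableSet[(MeasurableSpace.pi :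
        MeasurableSpace (Fin M → ℝ)).comap (fun ω => Y n ω)] {ω | Z n ω ≤ t} :=
      ⟨{y | sLen0 lam y ≤ t}, hs, rfl⟩
    have h2 : (MeasurableSpace.pi : MeasurableSpace (Fin M → ℝ)).comap (fun ω => Y n ω)
        = ⨆ m : Fin M, MeasurableSpace.comap (fun ω => Y n ω m) inferInstance := by
      rw [show (MeasurableSpace.pi : MeasurableSpace (Fin M → ℝ)) =
        ⨆ m : Fin M, (inferInstance : MeasurableSpace ℝ).comap
          (fun y : Fin M → ℝ => y m) from rfl, MeasurableSpace.comap_iSup]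
      simp only [MeasurableSpace.comap_comp, Function.comp_def]
    exact h2 ▸ h1
  have hprod : ∀ t : ℝ, 0 ≤ t → ∀ N : ℕ,
      P (⋂ n ∈ Finset.range N, {ω | Z n ω ≤ t}) =
        ENNReal.ofReal (1 - Real.exp (-(K * t ^ α))) ^ N := by
    intro t ht N
    induction N with
    | zero => simp
    | succ N ih =>
      have hdisj : Disjoint ((Set.Iio N) ×ˢ (Set.univ : Set (Fin M)))
          (({N} : Set ℕ) ×ˢ (Set.univ : Set (Fin M))) := by
        rw [Set.disjoint_left]
        rintro ⟨a, b⟩ ha hb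
        rw [Set.mem_prod] at ha hb
        simp only [Set.mem_Iio] at ha
        simp only [Set.mem_singleton_iff] at hb
        omega
      have hindep2 := indep_iSup_of_disjoint h_le hindep.iIndep hdisj
      have hA : MeasurableSet[⨆ p ∈ ((Set.Iio N) ×ˢ (Set.univ : Set (Fin M))),
          MeasurableSpace.comap (fun ω => Y p.1 ω p.2) inferInstance]
          (⋂ n ∈ Finset.range N, {ω | Z n ω ≤ t}) := by
        refine MeasurableSet.biInter (Set.to_countable _) fun n hn => ?_
        have hle2 : (⨆ m : Fin M,
            MeasurableSpace.comap (fun ω => Y n ω m) inferInstance) ≤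
            ⨆ p ∈ ((Set.Iio N) ×ˢ (Set.univ : Set (Fin M))),
              MeasurableSpace.comap (fun ω => Y p.1 ω p.2) inferInstance := by
          refine iSup_le fun m => ?_
          exact le_iSup_of_le (n, m) (le_iSup_of_le
            (Set.mem_prod.mpr ⟨Finset.mem_range.mp hn, Set.mem_univ _⟩) le_rfl)
        exact hle2 _ (hblock n t)
      have hB : MeasurableSet[⨆ p ∈ (({N} : Set ℕ) ×ˢ (Set.univ : Set (Fin M))),
          MeasurableSpace.comap (fun ω => Y p.1 ω p.2) inferInstance]
          {ω | Z N ω ≤ t} := by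
        have hle3 : (⨆ m : Fin M,
            MeasurableSpace.comap (fun ω => Y N ω m) inferInstance) ≤
            ⨆ p ∈ (({N} : Set ℕ) ×ˢ (Set.univ : Set (Fin M))),
              MeasurableSpace.comap (fun ω => Y p.1 ω p.2) inferInstance := by
          refine iSup_le fun m => ?_
          exact le_iSup_of_le (N, m) (le_iSup_of_le
            (Set.mem_prod.mpr ⟨rfl, Set.mem_univ _⟩) le_rfl)
        exact hle3 _ (hblock N t)
      rw [Finset.range_add_one, Finset.set_biInter_insert, Set.inter_comm,
        (Indep_iff _ _ _).mp hindep2 _ _ hA hB, ih, hcdfZ t ht N, pow_succ]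
  -- identification of the sequence
  have hKa : Kα ^ α = K := Real.rpow_inv_rpow hKpos.le hα.ne'
  refine (aux_pow_limit x
      (fun N : ℕ => Real.exp (-(Real.log N * (1 + x / (α * Real.log N)) ^ α)))
      (Eventually.of_forall fun n => Real.exp_pos _)
      (aux_nc_limit α x hα)).congr' ?_
  have hLev : ∀ᶠ N : ℕ in atTop, max 0 (|x| / α) < Real.log N ∧ 0 < N := by
    filter_upwards [(Real.tendsto_log_atTop.comp
      tendsto_natCast_atTop_atTop).eventually (eventually_gt_atTop (max 0 (|x| / α))),
      eventually_gt_atTop 0] with N h1 h2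
    exact ⟨h1, h2⟩
  filter_upwards [hLev] with N hN
  obtain ⟨hLgt, hNpos⟩ := hN
  set L : ℝ := Real.log N with hLdef
  have hL0 : 0 < L := lt_of_le_of_lt (le_max_left _ _) hLgt
  have hxL : |x| / α < L := lt_of_le_of_lt (le_max_right _ _) hLgt
  have hxabs : |x| < α * L := by
    rw [div_lt_iff₀ hα] at hxL; linarith [hxL]
  set u : ℝ := x / (α * L) with hudef
  have h1u : 0 < 1 + u := by
    have h3 : -(α * L) < x := by
      have := abs_lt.mp hxabs; exact this.1
    have : -1 < u := by
      rw [hudef, lt_div_iff₀ (by positivity : (0:ℝ) < α * L)]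
      linarith
    linarith
  set bN : ℝ := L ^ (α⁻¹ : ℝ) / Kα with hbNdef
  set aN : ℝ := L ^ (α⁻¹ - 1 : ℝ) / (α * Kα) with haNdef
  have hbNpos : 0 < bN := div_pos (Real.rpow_pos_of_pos hL0 _) hKαpos
  have haNpos : 0 < aN := div_pos (Real.rpow_pos_of_pos hL0 _) (by positivity)
  set t : ℝ := x * aN + bN with htdef
  have hrw : L ^ (α⁻¹ - 1 : ℝ) = L ^ (α⁻¹ : ℝ) / L := by
    rw [Real.rpow_sub hL0, Real.rpow_one]
  have ht : t = bN * (1 + u) := by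
    rw [htdef, hbNdef, haNdef, hudef, hrw]
    field_simp
    ring
  have htnn : 0 ≤ t := by rw [ht]; positivity
  -- the exponent identity
  have hKt : K * t ^ α = L * (1 + u) ^ α := by
    rw [ht, Real.mul_rpow hbNpos.le h1u.le, hbNdef,
      Real.div_rpow (Real.rpow_pos_of_pos hL0 _).le hKαpos.le,
      Real.rpow_inv_rpow hL0.le hα.ne', hKa]
    field_simp
  -- event identity
  have hev : {ω | ((⨆ n ∈ Finset.range N, Z n ω) - bN) / aN ≤ x} =
      ⋂ n ∈ Finset.range N, {ω | Z n ω ≤ t} := by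
    ext ω
    simp only [Set.mem_setOf_eq, Set.mem_iInter]
    rw [div_le_iff₀ haNpos, sub_le_iff_le_add, show x * aN + bN = t from rfl]
    constructor
    · intro h n hn
      have hbdd : BddAbove (Set.range fun n' : ℕ =>
          ⨆ _ : n' ∈ Finset.range N, Z n' ω) := by
        refine BddAbove.mono ?_ ((((Set.finite_Iio N).image
          (fun k => Z k ω)).insert 0).bddAbove)
        rintro _ ⟨n', rfl⟩
        dsimp only
        by_cases hmem : n' ∈ Finset.range N
        · rw [ciSup_pos hmem]
          exact Set.mem_insert_iff.mpr (Or.inr ⟨n', Finset.mem_range.mp hmem, rfl⟩)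
        · haveI : IsEmpty (n' ∈ Finset.range N) := ⟨hmem⟩
          rw [Real.iSup_of_isEmpty]
          exact Set.mem_insert _ _
      calc Z n ω = ⨆ _ : n ∈ Finset.range N, Z n ω := (ciSup_pos (f := fun _ => Z n ω) hn).symm
        _ ≤ ⨆ n' ∈ Finset.range N, Z n' ω := le_ciSup hbdd n
        _ ≤ t := h
    · intro h
      refine Real.iSup_le (fun n' => ?_) htnn
      by_cases hmem : n' ∈ Finset.range N
      · rw [ciSup_pos hmem]; exact h n' hmem
      · haveI : IsEmpty (n' ∈ Finset.range N) := ⟨hmem⟩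
        rw [Real.iSup_of_isEmpty]; exact htnn
  rw [hev, hprod t htnn N, ENNReal.toReal_pow, ENNReal.toReal_ofReal
    (by
      have : Real.exp (-(K * t ^ α)) ≤ 1 :=
        Real.exp_le_one_iff.2 (neg_nonpos.2 (by positivity))
      linarith), hKt]
end
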